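/- arXiv:1704.02800 — 5 statements merged into one kernel-verified Lean document; each statement's English description precedes it below -/
import Mathlib

section
/- Let (Γ,γ) be a 5-colored graph of order 2p representing a singular 4-manifold (i.e. every connected component Ξ, of order 2q_Ξ, of every 3-residue Γ_{{i,j,k}} satisfies g_{ij}(Ξ) + g_{ik}(Ξ) + g_{jk}(Ξ) = q_Ξ + 2). Then ω_G(Γ) = 6·( (p−1) − Σ_{i∈Δ₄}(g_{î} − 1) + (χ(K(Γ)) − 2) ), where χ(K(Γ)) = Σ_{i∈Δ₄} g_{î} − Σ_{{r,s,t}} g_{rst} + Σ_{{r,s}} g_{rs} − 3p is the Euler characteristic of the associated 4-pseudocomplex. -/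
/-!
Basic framework: edge-colored graphs à la crystallization theory.

A `(d+1)`-colored graph (finite connected multigraph, regular of degree `d+1`, with a proper
edge-coloring by the color set `C`, `#C = d+1`) is encoded by giving, for each color `c`,
the perfect matching formed by the `c`-colored edges, i.e. a fixed-point-free involution
`inv c` on the vertex set `V` (connectedness is the separate predicate `Conn`).
-/

structure CGraph (C V : Type) where
  inv : C → V → V
  invol : ∀ c v, inv c (inv c v) = v
  no_fixed : ∀ c v, inv c v ≠ v

namespace CGraph

variable {C V : Type}

/-- `g G B` = number of connected components of the spanning subgraph `Γ_B` consisting of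
the edges whose color lies in `B`. -/
noncomputable def g (G : CGraph C V) (B : Set C) : ℕ :=
  Nat.card (Quotient (Relation.EqvGen.setoid (fun v w : V => ∃ c ∈ B, G.inv c v = w)))

/-- connectedness of the colored graph -/
def Conn (G : CGraph C V) : Prop := G.g Set.univ = 1

/-- the spanning subgraph `Γ_B` of edges colored in `B`, as a colored graph with color set `B` -/
def restrict (G : CGraph C V) (B : Set C) : CGraph B V where
  inv c v := G.inv c.val v
  invol c v := G.invol c.val v
  no_fixed c v := G.no_fixed c.val v

/-- reachability in the colored graph -/
def reach (G : CGraph C V) : V → V → Prop :=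
  Relation.EqvGen (fun v w : V => ∃ c, G.inv c v = w)

/-- the connected component of `G` containing `v0`, as a colored graph on the vertices
reachable from `v0` -/
def component (G : CGraph C V) (v0 : V) : CGraph C {w : V // G.reach v0 w} where
  inv c w := ⟨G.inv c w.val,
    Relation.EqvGen.trans _ _ _ w.property (Relation.EqvGen.rel _ _ ⟨c, rfl⟩)⟩
  invol c w := Subtype.ext (G.invol c w.val)
  no_fixed c w h := G.no_fixed c w.val (congrArg Subtype.val h)

/-- A cyclic permutation of the (finite) color set: a permutation consisting of a single cycle
through all the colors.  Cyclic permutations `ε = (ε_0, …, ε_d)` of the color set, up to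
rotation, correspond bijectively to such permutations `σ` (via `σ : ε_j ↦ ε_{j+1}`), and
taking the inverse cyclic permutation corresponds to `σ ↦ σ⁻¹`. -/
def IsCyclicPerm (σ : Equiv.Perm C) : Prop := σ.IsCycle ∧ ∀ c, σ c ≠ c

/-- Euler characteristic `χ_σ(Γ) = Σ_{j} g_{ε_j ε_{j+1}} + (1-(n-1))·p` of the surface of the
regular embedding associated with the cyclic permutation `σ`; here `n = #C`, the graph has
order `2p` (i.e. `p = (#V)/2`), and the consecutive pairs `{ε_j, ε_{j+1}}` are exactly the
pairs `{c, σ c}`, `c ∈ C`. -/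
noncomputable def chi (G : CGraph C V) (σ : Equiv.Perm C) : ℚ :=
  (∑ᶠ c : C, (G.g {c, σ c} : ℚ)) +
    (2 - (Nat.card C : ℚ)) * ((Nat.card V : ℚ) / 2)

/-- the genus `ρ_σ` of the regular embedding associated with `σ`:
for a connected graph it is `(2 - χ_σ)/2`; in general (`g G Set.univ` connected components)
it is the sum of the genera of the connected components, matching the convention that the
genus/G-degree of a disconnected colored graph is the sum over its connected components. -/
noncomputable def rho (G : CGraph C V) (σ : Equiv.Perm C) : ℚ :=
  (2 * (G.g Set.univ : ℚ) - G.chi σ) / 2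

/-- the Gurau degree `ω_G(Γ) = Σ ρ_ε(Γ)`, the sum over the cyclic permutations of the color
set up to inverse; each class `{σ, σ⁻¹}` has `ρ_σ = ρ_{σ⁻¹}`, whence the division by `2`. -/
noncomputable def omegaG (G : CGraph C V) : ℚ :=
  (∑ᶠ σ : {σ : Equiv.Perm C // IsCyclicPerm σ}, G.rho σ.val) / 2

/-- bipartiteness -/
def Bipartite (G : CGraph C V) : Prop := ∃ f : V → Bool, ∀ c v, f (G.inv c v) ≠ f v

/-- color-preserving isomorphism of colored graphs -/
def IsIso {V' : Type} (G : CGraph C V) (G' : CGraph C V') : Prop :=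
  ∃ e : V ≃ V', ∀ c v, e (G.inv c v) = G'.inv c (e v)

end CGraph

namespace CGraph

/-- A 5-colored graph represents a singular 4-manifold iff every connected component `Ξ`
(of order `2q_Ξ`) of every 3-residue `Γ_{{i,j,k}}` satisfies
`g_{ij}(Ξ) + g_{ik}(Ξ) + g_{jk}(Ξ) = q_Ξ + 2` (i.e. every 3-residue represents the 2-sphere).
Here the component of `Γ_{{i,j,k}}` containing a vertex `v0` has vertex set
`{w // (Γ_{{i,j,k}}).reach v0 w}`, and the pair `{i,j}` of its colors is the subset
`{c | c.val = i ∨ c.val = j}` of its color set `{i,j,k}`. -/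
def SingularCond {V : Type} (G : CGraph (Fin 5) V) : Prop :=
  ∀ i j k : Fin 5, i ≠ j → i ≠ k → j ≠ k → ∀ v0 : V,
    ((((G.restrict {i, j, k}).component v0).g {c | c.val = i ∨ c.val = j} : ℚ) +
        (((G.restrict {i, j, k}).component v0).g {c | c.val = i ∨ c.val = k} : ℚ) +
        (((G.restrict {i, j, k}).component v0).g {c | c.val = j ∨ c.val = k} : ℚ)) =
      (Nat.card {w : V // (G.restrict ({i, j, k} : Set (Fin 5))).reach v0 w} : ℚ) / 2 + 2

end CGraph


set_option maxRecDepth 40000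

open Relation

section Aux
variable {α β : Type*}

theorem eqvGen_congr (e : α ≃ β) {r : α → α → Prop} {r' : β → β → Prop}
    (h : ∀ a b, r a b ↔ r' (e a) (e b)) {a b : α} :
    EqvGen r a b ↔ EqvGen r' (e a) (e b) := by
  constructor
  · intro H
    induction H with
    | rel x y hxy => exact .rel _ _ ((h x y).1 hxy)
    | refl x => exact .refl _
    | symm x y _ ih => exact .symm _ _ ih
    | trans x y z _ _ ih1 ih2 => exact .trans _ _ _ ih1 ih2
  · intro H
    have key : ∀ x y : β, EqvGen r' x y → EqvGen r (e.symm x) (e.symm y) := by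
      intro x y H
      induction H with
      | rel x y hxy => exact .rel _ _ ((h _ _).2 (by simpa using hxy))
      | refl x => exact .refl _
      | symm _ _ _ ih => exact .symm _ _ ih
      | trans _ _ _ _ _ ih1 ih2 => exact .trans _ _ _ ih1 ih2
    simpa using key _ _ H

theorem card_quot_congr (e : α ≃ β) {r : α → α → Prop} {r' : β → β → Prop}
    (h : ∀ a b, r a b ↔ r' (e a) (e b)) :
    Nat.card (Quotient (EqvGen.setoid r)) = Nat.card (Quotient (EqvGen.setoid r')) :=
  Nat.card_congr (Quotient.congr e fun a b => eqvGen_congr e h)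

theorem card_eq_sum_fibers {Q : Type*} [Finite α] [Fintype Q] (f : α → Q) :
    Nat.card α = ∑ q : Q, Nat.card {x // f x = q} := by
  classical
  haveI := Fintype.ofFinite α
  rw [← Nat.card_congr (Equiv.sigmaFiberEquiv f)]
  simp [Nat.card_eq_fintype_card]

theorem card_quot_eq_sum_fibers [Finite α] (r s : α → α → Prop)
    (hrs : ∀ a b, r a b → EqvGen s a b) [Fintype (Quotient (EqvGen.setoid s))] :
    Nat.card (Quotient (EqvGen.setoid r)) =
      ∑ q : Quotient (EqvGen.setoid s),
        Nat.card (Quotient (EqvGen.setoid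
          (fun v w : {a : α // Quotient.mk (EqvGen.setoid s) a = q} => r v.val w.val))) := by
  classical
  have hmono : ∀ a b, EqvGen r a b → EqvGen s a b := by
    intro a b h
    induction h with
    | rel x y hxy => exact hrs _ _ hxy
    | refl x => exact .refl _
    | symm x y _ ih => exact .symm _ _ ih
    | trans x y z _ _ ih1 ih2 => exact .trans _ _ _ ih1 ih2
  let f : Quotient (EqvGen.setoid r) → Quotient (EqvGen.setoid s) :=
    Quotient.lift (fun a => Quotient.mk (EqvGen.setoid s) a)
      (fun a b hab => Quotient.sound (hmono a b hab))
  rw [card_eq_sum_fibers f]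
  refine Finset.sum_congr rfl fun q _ => ?_
  set rq := fun v w : {a : α // Quotient.mk (EqvGen.setoid s) a = q} => r v.val w.val with hrq
  have hval : ∀ v w, EqvGen rq v w → EqvGen r v.val w.val := by
    intro v w h
    induction h with
    | rel x y hxy => exact .rel _ _ hxy
    | refl x => exact .refl _
    | symm x y _ ih => exact .symm _ _ ih
    | trans x y z _ _ ih1 ih2 => exact .trans _ _ _ ih1 ih2
  let φ : Quotient (EqvGen.setoid rq) → {x : Quotient (EqvGen.setoid r) // f x = q} :=
    Quotient.lift (fun v => ⟨Quotient.mk (EqvGen.setoid r) v.val, v.prop⟩)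
      (fun v w h => Subtype.ext (Quotient.sound (hval v w h)))
  have chain : ∀ a b, EqvGen r a b →
      ∀ (ha : Quotient.mk (EqvGen.setoid s) a = q) (hb : Quotient.mk (EqvGen.setoid s) b = q),
        EqvGen rq ⟨a, ha⟩ ⟨b, hb⟩ := by
    intro a b h
    induction h with
    | rel x y hxy => exact fun ha hb => .rel _ _ hxy
    | refl x => exact fun ha hb => .refl _
    | symm x y hxy ih => exact fun ha hb => .symm _ _ (ih hb ha)
    | trans x y z h1 h2 ih1 ih2 =>
        intro ha hb
        have hy : Quotient.mk (EqvGen.setoid s) y = q := by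
          rw [← ha]; exact (Quotient.sound (hmono _ _ h1)).symm
        exact .trans _ _ _ (ih1 ha hy) (ih2 hy hb)
  have hbij : Function.Bijective φ := by
    constructor
    · intro x y
      induction x using Quotient.ind with | _ v =>
      induction y using Quotient.ind with | _ w =>
      intro h
      have h' : Quotient.mk (EqvGen.setoid r) v.val = Quotient.mk (EqvGen.setoid r) w.val :=
        congrArg Subtype.val h
      have := Quotient.exact h'
      exact Quotient.sound (by
        have := chain v.val w.val this v.prop w.prop
        exact this)
    · rintro ⟨x, hx⟩
      induction x using Quotient.ind with | _ a =>
      exact ⟨Quotient.mk (EqvGen.setoid rq) ⟨a, hx⟩, Subtype.ext rfl⟩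
  symm
  exact Nat.card_eq_of_bijective φ hbij

end Aux

namespace CGraph
variable {V : Type}





theorem isCyclicPerm_iff (σ : Equiv.Perm (Fin 5)) :
    IsCyclicPerm σ ↔ σ ^ 5 = 1 ∧ σ ≠ 1 := by
  constructor
  · rintro ⟨hc, hf⟩
    have hsupp : σ.support = Finset.univ := by
      ext x; simp [Equiv.Perm.mem_support, hf x]
    have hord : orderOf σ = 5 := by
      rw [hc.orderOf, hsupp]; simp
    have h5 : σ ^ 5 = 1 := by
      have := pow_orderOf_eq_one σ
      rwa [hord] at this
    exact ⟨h5, fun h => hf 0 (by rw [h]; rfl)⟩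
  · rintro ⟨h5, hne⟩
    have hd := orderOf_dvd_of_pow_eq_one h5
    have hord : orderOf σ = 5 := by
      rcases (Nat.Prime.eq_one_or_self_of_dvd (by norm_num : Nat.Prime 5) _ hd) with h | h
      · exact absurd (orderOf_eq_one_iff.mp h) hne
      · exact h
    have hc : σ.IsCycle :=
      Equiv.Perm.isCycle_of_prime_order'' (by simp; norm_num) (by simp [hord])
    refine ⟨hc, fun c => ?_⟩
    have hcard : σ.support.card = 5 := by rw [← hc.orderOf, hord]
    have hsupp : σ.support = Finset.univ :=
      Finset.eq_univ_of_card _ (by simp [hcard])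
    have : c ∈ σ.support := hsupp ▸ Finset.mem_univ c
    exact Equiv.Perm.mem_support.mp this

theorem count_fiber : ∀ c s : Fin 5,
    (Finset.univ.filter
      (fun σ : Equiv.Perm (Fin 5) => (σ ^ 5 = 1 ∧ σ ≠ 1) ∧ σ c = s)).card =
      if c = s then 0 else 6 := by decide

theorem count_total :
    (Finset.univ.filter (fun σ : Equiv.Perm (Fin 5) => σ ^ 5 = 1 ∧ σ ≠ 1)).card = 24 := by
  decide



open Finset in
theorem omegaG_eq {V : Type} [Finite V] {p : ℕ} (G : CGraph (Fin 5) V) (hconn : G.Conn)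
    (horder : Nat.card V = 2 * p) :
    G.omegaG = 12 + 18 * (p : ℚ) -
      (3 / 2) * ∑ r : Fin 5, ∑ s : Fin 5, if r = s then 0 else (G.g {r, s} : ℚ) := by
  classical
  rw [omegaG]
  haveI : Fintype {σ : Equiv.Perm (Fin 5) // IsCyclicPerm σ} := Fintype.ofFinite _
  rw [finsum_eq_sum_of_fintype]
  rw [← Finset.sum_subtype (Finset.univ.filter IsCyclicPerm)
    (fun σ => by simp) (fun σ => G.rho σ)]
  have hfilt : Finset.univ.filter IsCyclicPerm =
      Finset.univ.filter (fun σ : Equiv.Perm (Fin 5) => σ ^ 5 = 1 ∧ σ ≠ 1) := by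
    ext σ; simp [isCyclicPerm_iff]
  rw [hfilt]
  set S := Finset.univ.filter (fun σ : Equiv.Perm (Fin 5) => σ ^ 5 = 1 ∧ σ ≠ 1) with hSdef
  have hrho : ∀ σ : Equiv.Perm (Fin 5),
      G.rho σ = (2 + 3 * (p : ℚ) - ∑ c : Fin 5, (G.g {c, σ c} : ℚ)) / 2 := by
    intro σ
    rw [rho, chi, finsum_eq_sum_of_fintype]
    rw [show G.g Set.univ = 1 from hconn, horder]
    simp [Nat.card_eq_fintype_card]
    ring
  rw [Finset.sum_congr rfl fun σ _ => hrho σ]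
  have hA : ∑ σ ∈ S, ∑ c : Fin 5, (G.g {c, σ c} : ℚ) =
      6 * ∑ r : Fin 5, ∑ s : Fin 5, (if r = s then 0 else (G.g {r, s} : ℚ)) := by
    rw [Finset.sum_comm]
    rw [Finset.mul_sum]
    refine Finset.sum_congr rfl fun c _ => ?_
    rw [← Finset.sum_fiberwise_of_maps_to' (g := fun σ : Equiv.Perm (Fin 5) => σ c)
      (t := Finset.univ) (fun σ _ => Finset.mem_univ _) (fun s => (G.g {c, s} : ℚ))]
    rw [Finset.mul_sum]
    refine Finset.sum_congr rfl fun s _ => ?_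
    rw [Finset.sum_const, hSdef, Finset.filter_filter, count_fiber c s]
    by_cases h : c = s <;> simp [h]
  have hcard : S.card = 24 := count_total
  calc (∑ σ ∈ S, (2 + 3 * (p : ℚ) - ∑ c : Fin 5, (G.g {c, σ c} : ℚ)) / 2) / 2
      = ((S.card : ℚ) * (2 + 3 * (p : ℚ)) - ∑ σ ∈ S, ∑ c : Fin 5, (G.g {c, σ c} : ℚ)) / 4 := by
        rw [Finset.sum_congr rfl fun σ _ =>
          sub_div (2 + 3 * (p : ℚ)) (∑ c : Fin 5, (G.g {c, σ c} : ℚ)) 2]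
        rw [Finset.sum_sub_distrib, Finset.sum_const, ← Finset.sum_div]
        push_cast
        ring
    _ = _ := by
        rw [hA, hcard]
        push_cast
        ring


theorem triple_id [Finite V] (G : CGraph (Fin 5) V) (hsing : G.SingularCond)
    (i j k : Fin 5) (hij : i ≠ j) (hik : i ≠ k) (hjk : j ≠ k) :
    (G.g {i, j} : ℚ) + G.g {i, k} + G.g {j, k} =
      (Nat.card V : ℚ) / 2 + 2 * G.g {i, j, k} := by
  classical
  set B : Set (Fin 5) := {i, j, k} with hB
  set s : V → V → Prop := fun v w => ∃ c ∈ B, G.inv c v = w with hs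
  set S := EqvGen.setoid s with hS
  haveI : Fintype (Quotient S) := Fintype.ofFinite _
  -- reach vs EqvGen s
  have hreach : ∀ v0 w : V, (G.restrict B).reach v0 w ↔ EqvGen s v0 w := by
    intro v0 w
    constructor
    · intro h
      exact EqvGen.mono (fun a b => fun ⟨c, hc⟩ => ⟨c.val, c.prop, hc⟩) _ _ h
    · intro h
      exact EqvGen.mono (fun a b => fun ⟨c, hc, hcc⟩ => ⟨⟨c, hc⟩, hcc⟩) _ _ h
  have hfibiff : ∀ q : Quotient S, ∀ w : V,
      Quotient.mk S w = q ↔ (G.restrict B).reach q.out w := by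
    intro q w
    rw [hreach, Quotient.mk_eq_iff_out]
    constructor
    · intro h; exact EqvGen.symm _ _ h
    · intro h; exact EqvGen.symm _ _ h
  -- decomposition of pair components
  have hdecomp : ∀ a b : Fin 5, ({a, b} : Set (Fin 5)) ⊆ B →
      (G.g {a, b} : ℕ) =
        ∑ q : Quotient S,
          ((G.restrict B).component q.out).g {c | c.val = a ∨ c.val = b} := by
    intro a b hsub
    rw [show G.g {a, b} = Nat.card (Quotient (EqvGen.setoid
        (fun v w : V => ∃ c ∈ ({a, b} : Set (Fin 5)), G.inv c v = w))) from rfl]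
    rw [card_quot_eq_sum_fibers _ s (fun v w => fun ⟨c, hc, h⟩ => .rel _ _ ⟨c, hsub hc, h⟩)]
    refine Finset.sum_congr rfl fun q _ => ?_
    rw [show ((G.restrict B).component q.out).g {c | c.val = a ∨ c.val = b} =
        Nat.card (Quotient (EqvGen.setoid
          (fun v w : {w : V // (G.restrict B).reach q.out w} =>
            ∃ c ∈ {c : B | c.val = a ∨ c.val = b},
              ((G.restrict B).component q.out).inv c v = w))) from rfl]
    refine card_quot_congr (Equiv.subtypeEquivRight (hfibiff q)) ?_
    intro v w
    constructor
    · rintro ⟨c, hc, h⟩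
      refine ⟨⟨c, hsub hc⟩, ?_, ?_⟩
      · rcases hc with hc | hc
        · exact Or.inl hc
        · exact Or.inr hc
      · exact Subtype.ext h
    · rintro ⟨c, hc, h⟩
      have h' : G.inv c.val v.val = w.val := congrArg Subtype.val h
      refine ⟨c.val, ?_, h'⟩
      rcases hc with hc | hc
      · exact Or.inl hc
      · exact Or.inr (by simpa using hc)
  -- decomposition of vertex count
  have hV : Nat.card V =
      ∑ q : Quotient S, Nat.card {w : V // (G.restrict B).reach q.out w} := by
    rw [card_eq_sum_fibers (fun v => Quotient.mk S v)]
    refine Finset.sum_congr rfl fun q _ => ?_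
    exact Nat.card_congr (Equiv.subtypeEquivRight (hfibiff q))
  -- triple count
  have hQ : G.g {i, j, k} = Fintype.card (Quotient S) := by
    rw [show G.g {i, j, k} = Nat.card (Quotient S) from rfl, Nat.card_eq_fintype_card]
  -- singular condition at each q
  have hq := fun q : Quotient S => hsing i j k hij hik hjk q.out
  -- assemble
  have e1 := hdecomp i j ?_
  have e2 := hdecomp i k ?_
  have e3 := hdecomp j k ?_
  · rw [e1, e2, e3, hV, hQ]
    push_cast
    rw [Finset.sum_div, ← Finset.sum_add_distrib, ← Finset.sum_add_distrib]
    rw [Fintype.card, Finset.card_eq_sum_ones]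
    push_cast
    rw [Finset.mul_sum, ← Finset.sum_add_distrib]
    refine Finset.sum_congr rfl fun q _ => ?_
    rw [hq q]
    ring
  · intro c hc
    simp only [hB, Set.mem_insert_iff, Set.mem_singleton_iff] at hc ⊢
    tauto
  · intro c hc
    simp only [hB, Set.mem_insert_iff, Set.mem_singleton_iff] at hc ⊢
    tauto
  · intro c hc
    simp only [hB, Set.mem_insert_iff, Set.mem_singleton_iff] at hc ⊢
    tauto


end CGraph

section Counts

theorem cnt3a : ∀ r s : Fin 5, r ≠ s →
    (Finset.univ.filter fun t : Fin 5 => r ≠ t ∧ s ≠ t).card = 3 := by decide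

theorem cnt3b : ∀ r t : Fin 5, r ≠ t →
    (Finset.univ.filter fun s : Fin 5 => r ≠ s ∧ s ≠ t).card = 3 := by decide

theorem cnt3c : ∀ s t : Fin 5, s ≠ t →
    (Finset.univ.filter fun r : Fin 5 => r ≠ s ∧ r ≠ t).card = 3 := by decide

theorem cnt4 : ∀ r : Fin 5, (Finset.univ.filter fun s : Fin 5 => r ≠ s).card = 4 := by decide

end Counts

open CGraph in
/-- Theorem `G-degree(n=4)`, third relation: for a 5-colored graph of order
`2p` representing a singular 4-manifold,
`ω_G(Γ) = 6·((p−1) − Σ_{i∈Δ₄}(g_î − 1) + (χ(K(Γ)) − 2))`, where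
`χ(K(Γ)) = Σ_i g_î − Σ_{{r,s,t}} g_{rst} + Σ_{{r,s}} g_{rs} − 3p` (unordered triple and pair
sums written as ordered sums divided by 6 resp. 2). -/
theorem stmt14 {p : ℕ} {V : Type} [Finite V]
    (G : CGraph (Fin 5) V) (hconn : G.Conn) (horder : Nat.card V = 2 * p)
    (hsing : G.SingularCond) :
    G.omegaG = 6 * (((p : ℚ) - 1) - (∑ i : Fin 5, ((G.g {c | c ≠ i} : ℚ) - 1)) +
        (((∑ i : Fin 5, (G.g {c | c ≠ i} : ℚ)) -
            (∑ r : Fin 5, ∑ s : Fin 5, ∑ t : Fin 5,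
              if r ≠ s ∧ r ≠ t ∧ s ≠ t then (G.g {r, s, t} : ℚ) else 0) / 6 +
            (∑ r : Fin 5, ∑ s : Fin 5, if r = s then 0 else (G.g {r, s} : ℚ)) / 2 -
            3 * (p : ℚ)) - 2)) := by
  classical
  have h3 : ∀ r s t : Fin 5, r ≠ s → r ≠ t → s ≠ t →
      (G.g {r, s} : ℚ) + G.g {r, t} + G.g {s, t} = p + 2 * G.g {r, s, t} := by
    intro r s t h1 h2 h3
    have h := G.triple_id hsing r s t h1 h2 h3
    rw [horder] at h
    push_cast at h
    linarith
  -- inner-sum evaluation lemmas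
  have innerT : ∀ (x : ℚ) (r s : Fin 5),
      (∑ t : Fin 5, if r ≠ s ∧ r ≠ t ∧ s ≠ t then x else 0) =
        if r = s then 0 else 3 * x := by
    intro x r s
    by_cases h : r = s
    · simp [h]
    · rw [if_neg h]
      rw [Finset.sum_congr rfl fun t _ =>
        (by by_cases ht : r ≠ t ∧ s ≠ t <;> simp [h, ht] :
          (if r ≠ s ∧ r ≠ t ∧ s ≠ t then x else 0) = if r ≠ t ∧ s ≠ t then x else 0)]
      rw [← Finset.sum_filter, Finset.sum_const, cnt3a r s h]
      rw [nsmul_eq_mul]; norm_num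
  have innerS : ∀ (x : ℚ) (r t : Fin 5),
      (∑ s : Fin 5, if r ≠ s ∧ r ≠ t ∧ s ≠ t then x else 0) =
        if r = t then 0 else 3 * x := by
    intro x r t
    by_cases h : r = t
    · simp [h]
    · rw [if_neg h]
      rw [Finset.sum_congr rfl fun s _ =>
        (by by_cases hs : r ≠ s ∧ s ≠ t <;> simp [h, hs] <;> tauto :
          (if r ≠ s ∧ r ≠ t ∧ s ≠ t then x else 0) = if r ≠ s ∧ s ≠ t then x else 0)]
      rw [← Finset.sum_filter, Finset.sum_const, cnt3b r t h]
      rw [nsmul_eq_mul]; norm_num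
  have innerR : ∀ (x : ℚ) (s t : Fin 5),
      (∑ r : Fin 5, if r ≠ s ∧ r ≠ t ∧ s ≠ t then x else 0) =
        if s = t then 0 else 3 * x := by
    intro x s t
    by_cases h : s = t
    · simp [h]
    · rw [if_neg h]
      rw [Finset.sum_congr rfl fun r _ =>
        (by by_cases hr : r ≠ s ∧ r ≠ t <;> simp [h, hr] <;> tauto :
          (if r ≠ s ∧ r ≠ t ∧ s ≠ t then x else 0) = if r ≠ s ∧ r ≠ t then x else 0)]
      rw [← Finset.sum_filter, Finset.sum_const, cnt3c s t h]
      rw [nsmul_eq_mul]; norm_num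
  -- the four triple sums
  have hS1 : (∑ r : Fin 5, ∑ s : Fin 5, ∑ t : Fin 5,
      if r ≠ s ∧ r ≠ t ∧ s ≠ t then (G.g {r, s} : ℚ) else 0) =
      3 * ∑ r : Fin 5, ∑ s : Fin 5, (if r = s then 0 else (G.g {r, s} : ℚ)) := by
    rw [Finset.mul_sum]
    refine Finset.sum_congr rfl fun r _ => ?_
    rw [Finset.mul_sum]
    refine Finset.sum_congr rfl fun s _ => ?_
    rw [innerT]
    by_cases h : r = s <;> simp [h]
  have hS2 : (∑ r : Fin 5, ∑ s : Fin 5, ∑ t : Fin 5,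
      if r ≠ s ∧ r ≠ t ∧ s ≠ t then (G.g {r, t} : ℚ) else 0) =
      3 * ∑ r : Fin 5, ∑ s : Fin 5, (if r = s then 0 else (G.g {r, s} : ℚ)) := by
    rw [Finset.mul_sum]
    refine Finset.sum_congr rfl fun r _ => ?_
    rw [Finset.sum_comm, Finset.mul_sum]
    refine Finset.sum_congr rfl fun t _ => ?_
    rw [innerS]
    by_cases h : r = t <;> simp [h]
  have hS3 : (∑ r : Fin 5, ∑ s : Fin 5, ∑ t : Fin 5,
      if r ≠ s ∧ r ≠ t ∧ s ≠ t then (G.g {s, t} : ℚ) else 0) =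
      3 * ∑ r : Fin 5, ∑ s : Fin 5, (if r = s then 0 else (G.g {r, s} : ℚ)) := by
    rw [Finset.sum_comm]
    rw [Finset.sum_congr rfl fun s (_ : s ∈ Finset.univ) => Finset.sum_comm]
    rw [Finset.mul_sum]
    refine Finset.sum_congr rfl fun s _ => ?_
    rw [Finset.mul_sum]
    refine Finset.sum_congr rfl fun t _ => ?_
    rw [innerR]
    by_cases h : s = t <;> simp [h]
  have hS0 : (∑ r : Fin 5, ∑ s : Fin 5, ∑ t : Fin 5,
      if r ≠ s ∧ r ≠ t ∧ s ≠ t then (p : ℚ) else 0) = 60 * p := by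
    rw [Finset.sum_congr rfl fun r _ => Finset.sum_congr rfl fun s _ => innerT (p : ℚ) r s]
    have : ∀ r : Fin 5, (∑ s : Fin 5, if r = s then 0 else 3 * (p : ℚ)) = 12 * p := by
      intro r
      rw [Finset.sum_congr rfl fun s _ =>
        (by by_cases h : r = s <;> simp [h] :
          (if r = s then (0 : ℚ) else 3 * p) = if r ≠ s then 3 * (p : ℚ) else 0)]
      rw [← Finset.sum_filter, Finset.sum_const, cnt4 r, nsmul_eq_mul]
      push_cast
      ring
    rw [Finset.sum_congr rfl fun r _ => this r, Finset.sum_const, Finset.card_univ]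
    simp only [Fintype.card_fin, nsmul_eq_mul]
    push_cast
    ring
  -- key identity
  have hTkey : 2 * (∑ r : Fin 5, ∑ s : Fin 5, ∑ t : Fin 5,
      if r ≠ s ∧ r ≠ t ∧ s ≠ t then (G.g {r, s, t} : ℚ) else 0) =
      9 * (∑ r : Fin 5, ∑ s : Fin 5, if r = s then 0 else (G.g {r, s} : ℚ)) - 60 * p := by
    have hsplit : ∀ r s t : Fin 5,
        (if r ≠ s ∧ r ≠ t ∧ s ≠ t then 2 * (G.g {r, s, t} : ℚ) else 0) =
          (if r ≠ s ∧ r ≠ t ∧ s ≠ t then (G.g {r, s} : ℚ) else 0) +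
          (if r ≠ s ∧ r ≠ t ∧ s ≠ t then (G.g {r, t} : ℚ) else 0) +
          (if r ≠ s ∧ r ≠ t ∧ s ≠ t then (G.g {s, t} : ℚ) else 0) -
          (if r ≠ s ∧ r ≠ t ∧ s ≠ t then (p : ℚ) else 0) := by
      intro r s t
      by_cases h : r ≠ s ∧ r ≠ t ∧ s ≠ t
      · simp only [if_pos h]
        have := h3 r s t h.1 h.2.1 h.2.2
        linarith
      · simp [h]
    calc 2 * (∑ r : Fin 5, ∑ s : Fin 5, ∑ t : Fin 5,
        if r ≠ s ∧ r ≠ t ∧ s ≠ t then (G.g {r, s, t} : ℚ) else 0)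
        = ∑ r : Fin 5, ∑ s : Fin 5, ∑ t : Fin 5,
            (if r ≠ s ∧ r ≠ t ∧ s ≠ t then 2 * (G.g {r, s, t} : ℚ) else 0) := by
          simp only [Finset.mul_sum, mul_ite, mul_zero]
      _ = ∑ r : Fin 5, ∑ s : Fin 5, ∑ t : Fin 5,
            ((if r ≠ s ∧ r ≠ t ∧ s ≠ t then (G.g {r, s} : ℚ) else 0) +
             (if r ≠ s ∧ r ≠ t ∧ s ≠ t then (G.g {r, t} : ℚ) else 0) +
             (if r ≠ s ∧ r ≠ t ∧ s ≠ t then (G.g {s, t} : ℚ) else 0) -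
             (if r ≠ s ∧ r ≠ t ∧ s ≠ t then (p : ℚ) else 0)) := by
          exact Finset.sum_congr rfl fun r _ => Finset.sum_congr rfl fun s _ =>
            Finset.sum_congr rfl fun t _ => hsplit r s t
      _ = 9 * (∑ r : Fin 5, ∑ s : Fin 5, if r = s then 0 else (G.g {r, s} : ℚ)) - 60 * p := by
          simp only [Finset.sum_add_distrib, Finset.sum_sub_distrib]
          rw [hS1, hS2, hS3, hS0]
          ring
  have homega := omegaG_eq G hconn horder
  have hsub : (∑ i : Fin 5, ((G.g {c | c ≠ i} : ℚ) - 1)) =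
      (∑ i : Fin 5, (G.g {c | c ≠ i} : ℚ)) - 5 := by
    rw [Finset.sum_sub_distrib]
    simp
  rw [homega, hsub]
  linarith [hTkey]
end

section
/- Let (Γ,γ) be a 5-colored graph of order 2p, and let ε̄ be a cyclic permutation of Δ₄ realizing the regular genus, i.e. ρ(Γ) = ρ_{ε̄}(Γ). Then ω_G(Γ) − 12ρ(Γ) = 3·( Σ_{i∈Z₅} g_{ε̄_i ε̄_{i+1}} − Σ_{i∈Z₅} g_{ε̄_i ε̄_{i+2}} ). -/
namespace Stmt16Aux
open CGraph

theorem isCyclicPerm_iff (σ : Equiv.Perm (Fin 5)) : IsCyclicPerm σ ↔ (σ ^ 5 = 1 ∧ σ ≠ 1) := by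
  constructor
  · rintro ⟨hc, hf⟩
    have hsupp : σ.support = Finset.univ := by
      ext c; simp [Equiv.Perm.mem_support, hf c]
    have ho : orderOf σ = 5 := by
      rw [hc.orderOf, hsupp]; simp
    exact ⟨orderOf_dvd_iff_pow_eq_one.mp (by rw [ho]), fun h => hf 0 (by simp [h])⟩
  · rintro ⟨h5, h1⟩
    have ho : orderOf σ = 5 := orderOf_eq_prime (p := 5) (hp := ⟨by norm_num⟩) h5 h1
    have hc : σ.IsCycle := σ.isCycle_of_prime_order' (by rw [ho]; norm_num) (by simp [ho])
    have hcard : σ.support.card = 5 := by rw [← hc.orderOf, ho]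
    have hsupp : σ.support = Finset.univ := Finset.eq_univ_of_card _ (by simp [hcard])
    exact ⟨hc, fun c => Equiv.Perm.mem_support.mp (hsupp ▸ Finset.mem_univ c)⟩

instance : DecidablePred fun σ : Equiv.Perm (Fin 5) => IsCyclicPerm σ := fun σ =>
  decidable_of_iff _ (isCyclicPerm_iff σ).symm

/-- the multiset of pairs `{c, σ c}` -/
def pr (σ : Equiv.Perm (Fin 5)) : Multiset (Finset (Fin 5)) :=
  Finset.univ.val.map fun c => ({c, σ c} : Finset (Fin 5))

/-- the set of cyclic permutations of `Fin 5` -/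
def cyc : Finset (Equiv.Perm (Fin 5)) := Finset.univ.filter fun σ => IsCyclicPerm σ

/-- the multiset of all 2-element subsets of `Fin 5` -/
def allp : Multiset (Finset (Fin 5)) :=
  (Finset.univ.filter fun s : Finset (Fin 5) => s.card = 2).val

set_option maxRecDepth 40000 in
theorem card_cyc : cyc.card = 24 := by decide

set_option maxRecDepth 40000 in
theorem bind_pr : cyc.val.bind pr = 12 • allp := by decide

set_option maxRecDepth 40000 in
theorem pr_add : ∀ σ : Equiv.Perm (Fin 5), IsCyclicPerm σ →
    pr σ + pr (σ * σ) = allp := by decide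

theorem sum_pr (f : Finset (Fin 5) → ℚ) (σ : Equiv.Perm (Fin 5)) :
    (∑ c : Fin 5, f {c, σ c}) = ((pr σ).map f).sum := by
  rw [Finset.sum_eq_multiset_sum, pr, Multiset.map_map]
  rfl

theorem sum_cyc (f : Finset (Fin 5) → ℚ) :
    (∑ σ ∈ cyc, ∑ c : Fin 5, f {c, σ c}) = 12 * (allp.map f).sum := by
  have h : ((cyc.val.bind pr).map f).sum = ∑ σ ∈ cyc, ∑ c : Fin 5, f {c, σ c} := by
    rw [Multiset.map_bind, Multiset.sum_bind, Finset.sum_eq_multiset_sum]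
    exact congrArg Multiset.sum (Multiset.map_congr rfl fun σ _ => (sum_pr f σ).symm)
  rw [← h, bind_pr, Multiset.map_nsmul, Multiset.sum_nsmul, nsmul_eq_mul]
  norm_num

end Stmt16Aux

open CGraph in
/-- Proposition `G-degree-regulargenus(n=4)`: if `Γ` is a 5-colored graph of
order `2p` and `σ̄` (encoding the cyclic permutation `ε̄` of `Δ₄` via `σ̄ : ε̄_i ↦ ε̄_{i+1}`)
realizes the regular genus `ρ(Γ) = ρ_{ε̄}(Γ)`, then
`ω_G(Γ) − 12ρ(Γ) = 3·(Σ_{i∈Z₅} g_{ε̄_iε̄_{i+1}} − Σ_{i∈Z₅} g_{ε̄_iε̄_{i+2}})`;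
the consecutive pairs `{ε̄_i, ε̄_{i+1}}` are the pairs `{c, σ̄ c}` and the pairs
`{ε̄_i, ε̄_{i+2}}` are the pairs `{c, σ̄ (σ̄ c)}`. -/
theorem stmt16 {p : ℕ} {V : Type} [Finite V]
    (G : CGraph (Fin 5) V) (hconn : G.Conn) (horder : Nat.card V = 2 * p)
    (σbar : Equiv.Perm (Fin 5)) (hσbar : IsCyclicPerm σbar)
    (hmin : ∀ σ : Equiv.Perm (Fin 5), IsCyclicPerm σ → G.rho σbar ≤ G.rho σ) :
    G.omegaG - 12 * G.rho σbar =
      3 * ((∑ c : Fin 5, (G.g {c, σbar c} : ℚ)) -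
        ∑ c : Fin 5, (G.g {c, σbar (σbar c)} : ℚ)) := by

  classical
  have hg1 : (G.g Set.univ : ℚ) = 1 := by
    rw [hconn]; norm_num
  -- the pair function
  set f : Finset (Fin 5) → ℚ := fun s => (G.g (↑s : Set (Fin 5)) : ℚ) with hf
  have hpair : ∀ (a b : Fin 5), (G.g {a, b} : ℚ) = f {a, b} := by
    intro a b; simp [hf]
  -- rewrite chi in terms of f
  have hchi : ∀ σ : Equiv.Perm (Fin 5),
      G.chi σ = (∑ c : Fin 5, f {c, σ c}) - 3 * p := by
    intro σ
    rw [CGraph.chi, finsum_eq_sum_of_fintype, horder]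
    have h5 : (Nat.card (Fin 5) : ℚ) = 5 := by simp
    rw [h5]
    have : ∀ c : Fin 5, (G.g {c, σ c} : ℚ) = f {c, σ c} := fun c => hpair c (σ c)
    rw [Finset.sum_congr rfl fun c _ => this c]
    push_cast
    ring
  have hrho : ∀ σ : Equiv.Perm (Fin 5),
      G.rho σ = (2 - (∑ c : Fin 5, f {c, σ c}) + 3 * p) / 2 := by
    intro σ
    rw [CGraph.rho, hg1, hchi]
    ring
  -- omegaG in terms of sums over cyc
  have homega : G.omegaG = ((Stmt16Aux.cyc.card : ℚ) * (2 + 3 * p)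
      - ∑ σ ∈ Stmt16Aux.cyc, ∑ c : Fin 5, f {c, σ c}) / 4 := by
    rw [CGraph.omegaG, finsum_eq_sum_of_fintype]
    have hsub : (∑ σ : {σ : Equiv.Perm (Fin 5) // IsCyclicPerm σ}, G.rho σ.val)
        = ∑ σ ∈ Stmt16Aux.cyc, G.rho σ := by
      rw [Stmt16Aux.cyc, ← Finset.sum_subtype_eq_sum_filter]
      exact Finset.sum_congr (by simp) (fun _ _ => rfl)
    rw [hsub]
    rw [Finset.sum_congr rfl fun σ _ => hrho σ]
    have hsplit : ∀ σ ∈ Stmt16Aux.cyc, (2 - (∑ c : Fin 5, f {c, σ c}) + 3 * (p : ℚ)) / 2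
        = (2 + 3 * (p : ℚ)) / 2 - (∑ c : Fin 5, f {c, σ c}) / 2 := fun σ _ => by ring
    rw [Finset.sum_congr rfl hsplit, Finset.sum_sub_distrib, Finset.sum_const,
      ← Finset.sum_div, nsmul_eq_mul]
    ring
  -- key counting identities
  have hcount : (∑ σ ∈ Stmt16Aux.cyc, ∑ c : Fin 5, f {c, σ c})
      = 12 * (Stmt16Aux.allp.map f).sum := Stmt16Aux.sum_cyc f
  have hST : (∑ c : Fin 5, f {c, σbar c}) + (∑ c : Fin 5, f {c, σbar (σbar c)})
      = (Stmt16Aux.allp.map f).sum := by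
    have h := Stmt16Aux.pr_add σbar hσbar
    have h1 := Stmt16Aux.sum_pr f σbar
    have h2 : (∑ c : Fin 5, f {c, σbar (σbar c)}) = ((Stmt16Aux.pr (σbar * σbar)).map f).sum :=
      Stmt16Aux.sum_pr f (σbar * σbar)
    rw [h1, h2, ← Multiset.sum_add, ← Multiset.map_add, h]
  -- final arithmetic
  rw [homega, hcount, hrho σbar, Stmt16Aux.card_cyc]
  rw [Finset.sum_congr rfl fun c _ => hpair c (σbar c),
    Finset.sum_congr rfl fun c _ => hpair c (σbar (σbar c))]
  rw [← hST]
  push_cast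
  ring
end

section
/- Let (Γ,γ) be a 5-colored graph of order 2p. If ω_G(Γ) = 12·ρ(Γ), then there exists a cyclic permutation ε̄ of Δ₄ with Σ_{i∈Z₅} g_{ε̄_i ε̄_{i+1}} = Σ_{i∈Z₅} g_{ε̄_i ε̄_{i+2}}. -/
open CGraph in
lemma CGraph.cyc_iff (σ : Equiv.Perm (Fin 5)) :
    IsCyclicPerm σ ↔ (σ ^ 5 = 1 ∧ σ ≠ 1) := by
  constructor
  · rintro ⟨hc, hnf⟩
    have hsupp : σ.support = Finset.univ := by
      ext c; simp [Equiv.Perm.mem_support, hnf c]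
    have ho : orderOf σ = 5 := by rw [hc.orderOf, hsupp]; simp
    refine ⟨?_, ?_⟩
    · have := pow_orderOf_eq_one σ; rwa [ho] at this
    · intro h1; exact hnf 0 (by simp [h1])
  · rintro ⟨h5, hne⟩
    haveI : Fact (Nat.Prime 5) := ⟨by norm_num⟩
    have ho : orderOf σ = 5 := orderOf_eq_prime h5 hne
    have hc : σ.IsCycle := Equiv.Perm.isCycle_of_prime_order'' (by simp; norm_num) (by simp [ho])
    refine ⟨hc, fun c hcc => ?_⟩
    have : σ.support = Finset.univ := Finset.eq_univ_of_card _ (by rw [← hc.orderOf, ho]; simp)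
    have : c ∈ σ.support := this ▸ Finset.mem_univ c
    exact (Equiv.Perm.mem_support.mp this) hcc

open CGraph in
lemma CGraph.card24 : Nat.card {σ : Equiv.Perm (Fin 5) // IsCyclicPerm σ} = 24 := by
  rw [Nat.card_congr (Equiv.subtypeEquivRight cyc_iff), Nat.card_eq_fintype_card]
  set_option maxRecDepth 10000 in decide

open CGraph in
/-- Proposition `uguaglianza_G-degree`(a): if `Γ` is a 5-colored graph of
order `2p` with `ω_G(Γ) = 12·ρ(Γ)` (`ρmin` being the regular genus, i.e. the least of the
genera `ρ_σ(Γ)` over the cyclic permutations `σ`), then there exists a cyclic permutation `ε̄`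
of `Δ₄` (encoded by `σ̄ : ε̄_i ↦ ε̄_{i+1}`) with
`Σ_{i∈Z₅} g_{ε̄_iε̄_{i+1}} = Σ_{i∈Z₅} g_{ε̄_iε̄_{i+2}}`. -/
theorem stmt17 {p : ℕ} {ρmin : ℚ} {V : Type} [Finite V]
    (G : CGraph (Fin 5) V) (hconn : G.Conn) (horder : Nat.card V = 2 * p)
    (hrho : IsLeast {x : ℚ | ∃ σ : Equiv.Perm (Fin 5), IsCyclicPerm σ ∧ G.rho σ = x} ρmin)
    (h : G.omegaG = 12 * ρmin) :
    ∃ σbar : Equiv.Perm (Fin 5), IsCyclicPerm σbar ∧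
      (∑ c : Fin 5, G.g {c, σbar c}) = ∑ c : Fin 5, G.g {c, σbar (σbar c)} := by
  classical
  haveI : Fintype {σ : Equiv.Perm (Fin 5) // IsCyclicPerm σ} := Fintype.ofFinite _
  have hcard : Fintype.card {σ : Equiv.Perm (Fin 5) // IsCyclicPerm σ} = 24 := by
    rw [← Nat.card_eq_fintype_card]; exact CGraph.card24
  have hsum : ∑ σ : {σ : Equiv.Perm (Fin 5) // IsCyclicPerm σ}, G.rho σ.val = 24 * ρmin := by
    have := h
    unfold omegaG at this
    rw [finsum_eq_sum_of_fintype] at this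
    linarith
  have hge : ∀ σ : {σ : Equiv.Perm (Fin 5) // IsCyclicPerm σ}, ρmin ≤ G.rho σ.val :=
    fun σ => hrho.2 ⟨σ.val, σ.property, rfl⟩
  have hall : ∀ σ : Equiv.Perm (Fin 5), IsCyclicPerm σ → G.rho σ = ρmin := by
    intro σ hσ
    have hz : ∑ σ : {σ : Equiv.Perm (Fin 5) // IsCyclicPerm σ}, (G.rho σ.val - ρmin) = 0 := by
      rw [Finset.sum_sub_distrib, hsum, Finset.sum_const, Finset.card_univ, hcard]
      ring
    have := (Finset.sum_eq_zero_iff_of_nonneg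
      (fun σ _ => by linarith [hge σ])).mp hz ⟨σ, hσ⟩ (Finset.mem_univ _)
    linarith
  set σ : Equiv.Perm (Fin 5) := finRotate 5 with hσdef
  have hσ : IsCyclicPerm σ := (CGraph.cyc_iff σ).mpr (by constructor <;> decide)
  have hσ2 : IsCyclicPerm (σ * σ) := (CGraph.cyc_iff _).mpr (by constructor <;> decide)
  refine ⟨σ, hσ, ?_⟩
  have hchi : G.chi σ = G.chi (σ * σ) := by
    have h1 := hall σ hσ
    have h2 := hall (σ * σ) hσ2
    unfold rho at h1 h2
    linarith
  unfold chi at hchi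
  rw [finsum_eq_sum_of_fintype, finsum_eq_sum_of_fintype] at hchi
  have hchi' : (∑ c : Fin 5, (G.g {c, σ c} : ℚ)) = ∑ c : Fin 5, (G.g {c, σ (σ c)} : ℚ) := by
    simpa [Equiv.Perm.mul_apply] using hchi
  exact_mod_cast hchi'
end

section
/- Let (Γ,γ) be a 5-colored graph of order 2p with g_{î} = 1 for every i ∈ Δ₄ (a crystallization). Then ω_G(Γ) = 3(p−1) + Σ_{i∈Δ₄} ω_G(Γ_{î}); consequently, if ω_G(Γ) ≤ 3(p−1) + 14, then there exists a color i ∈ Δ₄ such that ω_G(Γ_{î}) ≤ 2. -/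
namespace CGraph

variable {C V : Type}

-- ### auxiliary
variable {C' : Type}

/-- pullback of colors along an equivalence -/
def pull (G : CGraph C V) (e : C' ≃ C) : CGraph C' V where
  inv c v := G.inv (e c) v
  invol c v := G.invol (e c) v
  no_fixed c v := G.no_fixed (e c) v

lemma g_congr_aux {r1 r2 : V → V → Prop} (h : ∀ v w, r1 v w ↔ r2 v w) :
    Nat.card (Quotient (Relation.EqvGen.setoid r1)) =
      Nat.card (Quotient (Relation.EqvGen.setoid r2)) := by
  have : r1 = r2 := funext fun v => funext fun w => propext (h v w)
  rw [this]

lemma g_pull (G : CGraph C V) (e : C' ≃ C) (B : Set C') :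
    (G.pull e).g B = G.g (e '' B) := by
  refine g_congr_aux fun v w => ⟨?_, ?_⟩
  · rintro ⟨c, hc, h⟩; exact ⟨e c, ⟨c, hc, rfl⟩, h⟩
  · rintro ⟨c, ⟨c', hc', rfl⟩, h⟩; exact ⟨c', hc', h⟩

lemma g_restrict (G : CGraph C V) (B : Set C) (B' : Set B) :
    (G.restrict B).g B' = G.g (Subtype.val '' B') := by
  refine g_congr_aux fun v w => ⟨?_, ?_⟩
  · rintro ⟨c, hc, h⟩; exact ⟨c.val, ⟨c, hc, rfl⟩, h⟩
  · rintro ⟨c, ⟨c', hc', rfl⟩, h⟩; exact ⟨c', hc', h⟩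

/-- permCongr as a MulEquiv -/
def permCongrMul (e : C' ≃ C) : Equiv.Perm C' ≃* Equiv.Perm C where
  toEquiv := e.permCongr
  map_mul' p q := by ext x; simp [Equiv.Perm.mul_apply]

lemma isCyclicPerm_permCongr_of (e : C' ≃ C) (σ : Equiv.Perm C')
    (h : IsCyclicPerm σ) : IsCyclicPerm (e.permCongr σ) := by
  obtain ⟨⟨x, hx, hc⟩, hnf⟩ := h
  constructor
  · refine ⟨e x, by simpa using fun h' => hx (e.injective h'), fun y hy => ?_⟩
    have hy' : σ (e.symm y) ≠ e.symm y := by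
      intro h'
      apply hy
      simp only [Equiv.permCongr_apply, h', Equiv.apply_symm_apply]
    obtain ⟨i, hi⟩ := hc hy'
    refine ⟨i, ?_⟩
    have : e.permCongr σ ^ i = e.permCongr (σ ^ i) :=
      (map_zpow (permCongrMul e) σ i).symm
    rw [this]
    simp only [Equiv.permCongr_apply, Equiv.symm_apply_apply]
    rw [hi, Equiv.apply_symm_apply]
  · intro c h'
    simp only [Equiv.permCongr_apply] at h'
    exact hnf (e.symm c) (by simpa using congrArg e.symm h')

lemma isCyclicPerm_permCongr (e : C' ≃ C) (σ : Equiv.Perm C') :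
    IsCyclicPerm (e.permCongr σ) ↔ IsCyclicPerm σ := by
  refine ⟨fun h => ?_, isCyclicPerm_permCongr_of e σ⟩
  have := isCyclicPerm_permCongr_of e.symm _ h
  have he : e.symm.permCongr (e.permCongr σ) = σ := by ext x; simp
  rwa [he] at this

lemma chi_pull (G : CGraph C V) (e : C' ≃ C) (σ : Equiv.Perm C') :
    (G.pull e).chi σ = G.chi (e.permCongr σ) := by
  unfold chi
  rw [Nat.card_congr e]
  congr 1
  have : ∀ c' : C', ((G.pull e).g {c', σ c'} : ℚ)
      = (fun c => (G.g {c, (e.permCongr σ) c} : ℚ)) (e c') := by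
    intro c'
    simp only [g_pull, Set.image_pair, Equiv.permCongr_apply, Equiv.symm_apply_apply]
  rw [finsum_congr this]
  exact finsum_comp_equiv e (f := fun c => (G.g {c, (e.permCongr σ) c} : ℚ))

lemma g_univ_pull (G : CGraph C V) (e : C' ≃ C) :
    (G.pull e).g Set.univ = G.g Set.univ := by
  rw [g_pull, Set.image_univ, Equiv.range_eq_univ]

lemma rho_pull (G : CGraph C V) (e : C' ≃ C) (σ : Equiv.Perm C') :
    (G.pull e).rho σ = G.rho (e.permCongr σ) := by
  unfold rho
  rw [chi_pull, g_univ_pull]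

lemma omegaG_pull (G : CGraph C V) (e : C' ≃ C) :
    (G.pull e).omegaG = G.omegaG := by
  unfold omegaG
  congr 1
  refine finsum_eq_of_bijective
    (fun σ : {σ : Equiv.Perm C' // IsCyclicPerm σ} =>
      (⟨e.permCongr σ.val, isCyclicPerm_permCongr_of e σ.val σ.property⟩ :
        {σ : Equiv.Perm C // IsCyclicPerm σ})) ?_ ?_
  · exact (Equiv.subtypeEquiv e.permCongr
      (fun σ => (isCyclicPerm_permCongr e σ).symm)).bijective
  · intro σ
    exact rho_pull G e σ.val

-- ### cyclic permutation enumeration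
open Equiv Finset in
theorem isCyclicPerm_iff' {α : Type} [Fintype α] [DecidableEq α] (x0 : α) (σ : Perm α) :
    IsCyclicPerm σ ↔ (∀ c, σ c ≠ c) ∧ ∀ y, ∃ i < Fintype.card α, (σ ^ i) x0 = y := by
  constructor
  · rintro ⟨⟨x, hx, h⟩, hnf⟩
    refine ⟨hnf, fun y => ?_⟩
    have hsc : σ.SameCycle x0 y := ((h (hnf x0)).symm.trans (h (hnf y)))
    have hord : orderOf σ = Fintype.card α := by
      have h1 : σ.support = Finset.univ := Finset.eq_univ_of_forall fun c =>
        Equiv.Perm.mem_support.2 (hnf c)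
      rw [Equiv.Perm.IsCycle.orderOf ⟨x, hx, h⟩, h1, Finset.card_univ]
    obtain ⟨i, hi, hiy⟩ := hsc.exists_pow_eq'
    exact ⟨i, hord ▸ hi, hiy⟩
  · rintro ⟨hnf, horb⟩
    refine ⟨⟨x0, hnf x0, fun y _ => ?_⟩, hnf⟩
    obtain ⟨i, _, hi⟩ := horb y
    exact ⟨(i : ℤ), by simpa [zpow_natCast] using hi⟩

def cycP {n : ℕ} [NeZero n] (σ : Equiv.Perm (Fin n)) : Prop :=
  (∀ c, σ c ≠ c) ∧ ∀ y, ∃ i < n, (σ ^ i) 0 = y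

instance {n : ℕ} [NeZero n] : DecidablePred (cycP (n := n)) := fun σ => by
  unfold cycP; infer_instance

theorem isCyclicPerm_iff_cycP {n : ℕ} [NeZero n] (σ : Equiv.Perm (Fin n)) :
    IsCyclicPerm σ ↔ cycP σ := by
  rw [isCyclicPerm_iff' (0 : Fin n) σ]; simp [cycP]

def S5 : Finset (Equiv.Perm (Fin 5)) := Finset.univ.filter cycP
def S4 : Finset (Equiv.Perm (Fin 4)) := Finset.univ.filter cycP

lemma mem_S5 (σ : Equiv.Perm (Fin 5)) : σ ∈ S5 ↔ IsCyclicPerm σ := by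
  simp [S5, Finset.mem_filter, isCyclicPerm_iff_cycP σ]

lemma mem_S4 (σ : Equiv.Perm (Fin 4)) : σ ∈ S4 ↔ IsCyclicPerm σ := by
  simp [S4, Finset.mem_filter, isCyclicPerm_iff_cycP σ]

set_option maxRecDepth 40000 in
theorem card_S5 : S5.card = 24 := by decide

set_option maxRecDepth 40000 in
theorem card_S4 : S4.card = 6 := by decide

set_option maxRecDepth 40000 in
theorem fiber_S4 : ∀ c y : Fin 4, ((S4.filter (fun σ => σ c = y)).card)
    = if y = c then 0 else 2 := by decide

set_option maxRecDepth 40000 in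
theorem fiber_S5 : ∀ c y : Fin 5, ((S5.filter (fun σ => σ c = y)).card)
    = if y = c then 0 else 6 := by decide

-- ### the key counting computations
open Finset in
lemma key_sum {n : ℕ} [NeZero n] (S : Finset (Equiv.Perm (Fin n))) (k : ℕ)
    (hfib : ∀ c y : Fin n, ((S.filter (fun σ => σ c = y)).card) = if y = c then 0 else k)
    (f : Fin n → Fin n → ℚ) :
    ∑ σ ∈ S, ∑ c : Fin n, f c (σ c)
      = ∑ c : Fin n, ∑ y : Fin n, ((if y = c then 0 else k : ℕ) : ℚ) * f c y := by
  rw [Finset.sum_comm]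
  refine Finset.sum_congr rfl fun c _ => ?_
  rw [← Finset.sum_fiberwise_of_maps_to (g := fun σ : Equiv.Perm (Fin n) => σ c)
    (t := Finset.univ) (fun σ _ => Finset.mem_univ _)]
  refine Finset.sum_congr rfl fun y _ => ?_
  have h1 : ∀ σ ∈ S.filter (fun σ => σ c = y), f c (σ c) = f c y := fun σ hσ => by
    rw [(Finset.mem_filter.1 hσ).2]
  rw [Finset.sum_congr rfl h1, Finset.sum_const, hfib c y, nsmul_eq_mul]

lemma omegaG_fin4 {p : ℕ} (H : CGraph (Fin 4) V) (hu : H.g Set.univ = 1)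
    (hV : Nat.card V = 2 * p) :
    H.omegaG = 3 + 3 * (p : ℚ) - ((H.g {0,1} : ℚ) + (H.g {0,2} : ℚ) + (H.g {0,3} : ℚ)
      + (H.g {1,2} : ℚ) + (H.g {1,3} : ℚ) + (H.g {2,3} : ℚ)) := by
  letI : Fintype {σ : Equiv.Perm (Fin 4) // IsCyclicPerm σ} := Fintype.ofFinite _
  unfold omegaG
  rw [finsum_eq_sum_of_fintype, ← Finset.sum_subtype S4 mem_S4 (fun σ => H.rho σ)]
  have hrho : ∀ σ ∈ S4, H.rho σ
      = (2 + 2 * (p : ℚ) - ∑ c : Fin 4, (H.g {c, σ c} : ℚ)) / 2 := by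
    intro σ _
    unfold rho chi
    rw [hu, finsum_eq_sum_of_fintype, hV]
    simp only [Nat.card_eq_fintype_card, Fintype.card_fin]
    push_cast
    ring
  rw [Finset.sum_congr rfl hrho, ← Finset.sum_div, Finset.sum_sub_distrib,
    Finset.sum_const, card_S4, key_sum S4 2 fiber_S4 (fun a b => (H.g {a, b} : ℚ))]
  have e10 : ({1, 0} : Set (Fin 4)) = {0, 1} := Set.pair_comm 1 0
  have e20 : ({2, 0} : Set (Fin 4)) = {0, 2} := Set.pair_comm 2 0
  have e30 : ({3, 0} : Set (Fin 4)) = {0, 3} := Set.pair_comm 3 0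
  have e21 : ({2, 1} : Set (Fin 4)) = {1, 2} := Set.pair_comm 2 1
  have e31 : ({3, 1} : Set (Fin 4)) = {1, 3} := Set.pair_comm 3 1
  have e32 : ({3, 2} : Set (Fin 4)) = {2, 3} := Set.pair_comm 3 2
  simp only [Fin.sum_univ_four]
  simp (config := { decide := true }) only [e10, e20, e30, e21, e31, e32, if_true, if_false]
  push_cast
  ring

lemma omegaG_fin5 {p : ℕ} (G : CGraph (Fin 5) V) (hu : G.g Set.univ = 1)
    (hV : Nat.card V = 2 * p) :
    G.omegaG = 12 + 18 * (p : ℚ) - 3 * ((G.g {0,1} : ℚ) + (G.g {0,2} : ℚ) + (G.g {0,3} : ℚ)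
      + (G.g {0,4} : ℚ) + (G.g {1,2} : ℚ) + (G.g {1,3} : ℚ) + (G.g {1,4} : ℚ)
      + (G.g {2,3} : ℚ) + (G.g {2,4} : ℚ) + (G.g {3,4} : ℚ)) := by
  letI : Fintype {σ : Equiv.Perm (Fin 5) // IsCyclicPerm σ} := Fintype.ofFinite _
  unfold omegaG
  rw [finsum_eq_sum_of_fintype, ← Finset.sum_subtype S5 mem_S5 (fun σ => G.rho σ)]
  have hrho : ∀ σ ∈ S5, G.rho σ
      = (2 + 3 * (p : ℚ) - ∑ c : Fin 5, (G.g {c, σ c} : ℚ)) / 2 := by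
    intro σ _
    unfold rho chi
    rw [hu, finsum_eq_sum_of_fintype, hV]
    simp only [Nat.card_eq_fintype_card, Fintype.card_fin]
    push_cast
    ring
  rw [Finset.sum_congr rfl hrho, ← Finset.sum_div, Finset.sum_sub_distrib,
    Finset.sum_const, card_S5, key_sum S5 6 fiber_S5 (fun a b => (G.g {a, b} : ℚ))]
  have e10 : ({1, 0} : Set (Fin 5)) = {0, 1} := Set.pair_comm 1 0
  have e20 : ({2, 0} : Set (Fin 5)) = {0, 2} := Set.pair_comm 2 0
  have e30 : ({3, 0} : Set (Fin 5)) = {0, 3} := Set.pair_comm 3 0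
  have e40 : ({4, 0} : Set (Fin 5)) = {0, 4} := Set.pair_comm 4 0
  have e21 : ({2, 1} : Set (Fin 5)) = {1, 2} := Set.pair_comm 2 1
  have e31 : ({3, 1} : Set (Fin 5)) = {1, 3} := Set.pair_comm 3 1
  have e41 : ({4, 1} : Set (Fin 5)) = {1, 4} := Set.pair_comm 4 1
  have e32 : ({3, 2} : Set (Fin 5)) = {2, 3} := Set.pair_comm 3 2
  have e42 : ({4, 2} : Set (Fin 5)) = {2, 4} := Set.pair_comm 4 2
  have e43 : ({4, 3} : Set (Fin 5)) = {3, 4} := Set.pair_comm 4 3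
  simp only [Fin.sum_univ_five]
  simp (config := { decide := true }) only [e10, e20, e30, e40, e21, e31, e41, e32, e42, e43, if_true, if_false]
  push_cast
  ring

end CGraph


open CGraph in
/-- from Proposition `classif_G-degree(n=4_subgenus)`: if `Γ` is a 5-colored
graph of order `2p` with `g_î = 1` for every `i ∈ Δ₄` (a crystallization), then
`ω_G(Γ) = 3(p−1) + Σ_{i∈Δ₄} ω_G(Γ_î)`; consequently, if `ω_G(Γ) ≤ 3(p−1) + 14` then some color
`i` has `ω_G(Γ_î) ≤ 2`.  (`ω_G(Γ_î)` is the sum of the G-degrees of the connected components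
of the 4-colored graph `Γ_î`.) -/
theorem stmt18 {p : ℕ} {V : Type} [Finite V]
    (G : CGraph (Fin 5) V) (hconn : G.Conn) (horder : Nat.card V = 2 * p)
    (hcr : ∀ i : Fin 5, G.g {c | c ≠ i} = 1) :
    G.omegaG = 3 * ((p : ℚ) - 1) + ∑ i : Fin 5, (G.restrict {c | c ≠ i}).omegaG ∧
      (G.omegaG ≤ 3 * ((p : ℚ) - 1) + 14 →
        ∃ i : Fin 5, (G.restrict {c | c ≠ i}).omegaG ≤ 2) := by
  classical
  have hu : G.g Set.univ = 1 := hconn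
  have hη : ∀ (i : Fin 5) (e : Fin 4 ≃ {x : Fin 5 // x ≠ i}),
      (G.restrict {c | c ≠ i}).omegaG = 3 + 3 * (p : ℚ) -
        ((G.g {(e 0).val, (e 1).val} : ℚ) + (G.g {(e 0).val, (e 2).val} : ℚ)
          + (G.g {(e 0).val, (e 3).val} : ℚ) + (G.g {(e 1).val, (e 2).val} : ℚ)
          + (G.g {(e 1).val, (e 3).val} : ℚ) + (G.g {(e 2).val, (e 3).val} : ℚ)) := by
    intro i e
    have hg : ∀ a b : Fin 4, ((G.restrict {c | c ≠ i}).pull e).g {a, b}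
        = G.g {(e a).val, (e b).val} := by
      intro a b
      rw [g_pull, Set.image_pair, g_restrict, Set.image_pair]
    have hu4 : ((G.restrict {c | c ≠ i}).pull e).g Set.univ = 1 := by
      rw [g_univ_pull, g_restrict, Set.image_univ, Subtype.range_coe]
      exact hcr i
    rw [← omegaG_pull (G.restrict {c | c ≠ i}) e, omegaG_fin4 _ hu4 horder,
      hg 0 1, hg 0 2, hg 0 3, hg 1 2, hg 1 3, hg 2 3]
  have c00 : ((finSuccAboveEquiv (0:Fin 5)) (0:Fin 4)).val = 1 := by decide
  have c01 : ((finSuccAboveEquiv (0:Fin 5)) (1:Fin 4)).val = 2 := by decide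
  have c02 : ((finSuccAboveEquiv (0:Fin 5)) (2:Fin 4)).val = 3 := by decide
  have c03 : ((finSuccAboveEquiv (0:Fin 5)) (3:Fin 4)).val = 4 := by decide
  have c10 : ((finSuccAboveEquiv (1:Fin 5)) (0:Fin 4)).val = 0 := by decide
  have c11 : ((finSuccAboveEquiv (1:Fin 5)) (1:Fin 4)).val = 2 := by decide
  have c12 : ((finSuccAboveEquiv (1:Fin 5)) (2:Fin 4)).val = 3 := by decide
  have c13 : ((finSuccAboveEquiv (1:Fin 5)) (3:Fin 4)).val = 4 := by decide
  have c20 : ((finSuccAboveEquiv (2:Fin 5)) (0:Fin 4)).val = 0 := by decide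
  have c21 : ((finSuccAboveEquiv (2:Fin 5)) (1:Fin 4)).val = 1 := by decide
  have c22 : ((finSuccAboveEquiv (2:Fin 5)) (2:Fin 4)).val = 3 := by decide
  have c23 : ((finSuccAboveEquiv (2:Fin 5)) (3:Fin 4)).val = 4 := by decide
  have c30 : ((finSuccAboveEquiv (3:Fin 5)) (0:Fin 4)).val = 0 := by decide
  have c31 : ((finSuccAboveEquiv (3:Fin 5)) (1:Fin 4)).val = 1 := by decide
  have c32 : ((finSuccAboveEquiv (3:Fin 5)) (2:Fin 4)).val = 2 := by decide
  have c33 : ((finSuccAboveEquiv (3:Fin 5)) (3:Fin 4)).val = 4 := by decide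
  have c40 : ((finSuccAboveEquiv (4:Fin 5)) (0:Fin 4)).val = 0 := by decide
  have c41 : ((finSuccAboveEquiv (4:Fin 5)) (1:Fin 4)).val = 1 := by decide
  have c42 : ((finSuccAboveEquiv (4:Fin 5)) (2:Fin 4)).val = 2 := by decide
  have c43 : ((finSuccAboveEquiv (4:Fin 5)) (3:Fin 4)).val = 3 := by decide
  have h0 : (G.restrict {c | c ≠ (0:Fin 5)}).omegaG
      = 3 + 3 * (p : ℚ) - ((G.g {1, 2} + G.g {1, 3} + G.g {1, 4} + G.g {2, 3} + G.g {2, 4} + G.g {3, 4} : ℕ) : ℚ) := by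
    rw [hη 0 (finSuccAboveEquiv 0), c00, c01, c02, c03]
    push_cast
    ring
  have h1 : (G.restrict {c | c ≠ (1:Fin 5)}).omegaG
      = 3 + 3 * (p : ℚ) - ((G.g {0, 2} + G.g {0, 3} + G.g {0, 4} + G.g {2, 3} + G.g {2, 4} + G.g {3, 4} : ℕ) : ℚ) := by
    rw [hη 1 (finSuccAboveEquiv 1), c10, c11, c12, c13]
    push_cast
    ring
  have h2 : (G.restrict {c | c ≠ (2:Fin 5)}).omegaG
      = 3 + 3 * (p : ℚ) - ((G.g {0, 1} + G.g {0, 3} + G.g {0, 4} + G.g {1, 3} + G.g {1, 4} + G.g {3, 4} : ℕ) : ℚ) := by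
    rw [hη 2 (finSuccAboveEquiv 2), c20, c21, c22, c23]
    push_cast
    ring
  have h3 : (G.restrict {c | c ≠ (3:Fin 5)}).omegaG
      = 3 + 3 * (p : ℚ) - ((G.g {0, 1} + G.g {0, 2} + G.g {0, 4} + G.g {1, 2} + G.g {1, 4} + G.g {2, 4} : ℕ) : ℚ) := by
    rw [hη 3 (finSuccAboveEquiv 3), c30, c31, c32, c33]
    push_cast
    ring
  have h4 : (G.restrict {c | c ≠ (4:Fin 5)}).omegaG
      = 3 + 3 * (p : ℚ) - ((G.g {0, 1} + G.g {0, 2} + G.g {0, 3} + G.g {1, 2} + G.g {1, 3} + G.g {2, 3} : ℕ) : ℚ) := by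
    rw [hη 4 (finSuccAboveEquiv 4), c40, c41, c42, c43]
    push_cast
    ring
  have hω : G.omegaG = 12 + 18 * (p : ℚ) - 3 * ((G.g {0,1} : ℚ) + (G.g {0,2} : ℚ)
      + (G.g {0,3} : ℚ) + (G.g {0,4} : ℚ) + (G.g {1,2} : ℚ) + (G.g {1,3} : ℚ)
      + (G.g {1,4} : ℚ) + (G.g {2,3} : ℚ) + (G.g {2,4} : ℚ) + (G.g {3,4} : ℚ)) :=
    omegaG_fin5 G hu horder
  have part1 : G.omegaG
      = 3 * ((p : ℚ) - 1) + ∑ i : Fin 5, (G.restrict {c | c ≠ i}).omegaG := by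
    rw [Fin.sum_univ_five, h0, h1, h2, h3, h4, hω]
    push_cast
    ring
  refine ⟨part1, fun hle => ?_⟩
  by_contra hcon
  push_neg at hcon
  have key : ∀ (A : ℕ) (x : ℚ), x = 3 + 3 * (p : ℚ) - (A : ℚ) → 2 < x → 3 ≤ x := by
    intro A x hx h2
    have h1 : (A : ℚ) < 3 * (p : ℚ) + 1 := by rw [hx] at h2; linarith
    have h3 : A < 3 * p + 1 := by exact_mod_cast h1
    have h4 : (A : ℚ) ≤ 3 * (p : ℚ) := by exact_mod_cast Nat.lt_succ_iff.mp h3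
    rw [hx]
    linarith
  have k0 : 3 ≤ (G.restrict {c | c ≠ (0:Fin 5)}).omegaG := key _ _ h0 (hcon 0)
  have k1 : 3 ≤ (G.restrict {c | c ≠ (1:Fin 5)}).omegaG := key _ _ h1 (hcon 1)
  have k2 : 3 ≤ (G.restrict {c | c ≠ (2:Fin 5)}).omegaG := key _ _ h2 (hcon 2)
  have k3 : 3 ≤ (G.restrict {c | c ≠ (3:Fin 5)}).omegaG := key _ _ h3 (hcon 3)
  have k4 : 3 ≤ (G.restrict {c | c ≠ (4:Fin 5)}).omegaG := key _ _ h4 (hcon 4)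
  rw [part1, Fin.sum_univ_five] at hle
  linarith
end

section
/- Let d ≥ 3 and let (Γ,γ) be a (d+1)-colored graph. If (Γ′,γ′) is obtained from Γ by eliminating a 1-dipole, then ω_G(Γ′) = ω_G(Γ). -/
open Relation

section Generic
variable {α β : Type*}

lemma eqvGen_bind {r s : α → α → Prop} (h : ∀ a b, r a b → EqvGen s a b) {a b : α}
    (hab : EqvGen r a b) : EqvGen s a b := by
  induction hab with
  | rel x y h' => exact h _ _ h'
  | refl x => exact .refl x
  | symm x y _ ih => exact .symm _ _ ih
  | trans x y z _ _ ih1 ih2 => exact .trans _ _ _ ih1 ih2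

lemma eqvGen_map {r : α → α → Prop} {s : β → β → Prop} (f : α → β)
    (h : ∀ a b, r a b → EqvGen s (f a) (f b)) {a b : α}
    (hab : EqvGen r a b) : EqvGen s (f a) (f b) := by
  induction hab with
  | rel x y h' => exact h _ _ h'
  | refl x => exact .refl _
  | symm x y _ ih => exact .symm _ _ ih
  | trans x y z _ _ ih1 ih2 => exact .trans _ _ _ ih1 ih2

lemma card_quot_eq (r : α → α → Prop) (s : β → β → Prop) (f : α → β) (g : β → α)
    (hf : ∀ a a', r a a' → EqvGen s (f a) (f a'))
    (hg : ∀ b b', s b b' → EqvGen r (g b) (g b'))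
    (hgf : ∀ a, EqvGen r (g (f a)) a)
    (hfg : ∀ b, EqvGen s (f (g b)) b) :
    Nat.card (Quotient (EqvGen.setoid r)) = Nat.card (Quotient (EqvGen.setoid s)) := by
  apply Nat.card_congr
  refine ⟨Quotient.lift (fun a => Quotient.mk (EqvGen.setoid s) (f a))
      (fun a a' (h : EqvGen r a a') => Quotient.sound (eqvGen_map f hf h)),
    Quotient.lift (fun b => Quotient.mk (EqvGen.setoid r) (g b))
      (fun b b' (h : EqvGen s b b') => Quotient.sound (eqvGen_map g hg h)), ?_, ?_⟩
  · intro q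
    induction q using Quotient.ind with
    | _ a => exact Quotient.sound (hgf a)
  · intro q
    induction q using Quotient.ind with
    | _ b => exact Quotient.sound (hfg b)

lemma card_ne_add_one [Finite α] (a : α) :
    Nat.card α = Nat.card {x : α // x ≠ a} + 1 := by
  classical
  rw [← Finite.card_option]
  exact Nat.card_congr (Equiv.optionSubtypeNe a).symm

lemma card_quot_glue [Finite α] (r : α → α → Prop) (p q : α) (h : ¬ EqvGen r p q) :
    Nat.card (Quotient (EqvGen.setoid r)) =
      Nat.card (Quotient (EqvGen.setoid (fun x y => r x y ∨ (x = p ∧ y = q)))) + 1 := by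
  classical
  set s : α → α → Prop := fun x y => r x y ∨ (x = p ∧ y = q) with hs
  have hrs : ∀ a b, r a b → EqvGen s a b := fun a b h' => EqvGen.rel _ _ (Or.inl h')
  -- F0 : α → {x : Quotient r // x ≠ ⟦q⟧}
  set Qr := Quotient (EqvGen.setoid r)
  have hpq : (Quotient.mk (EqvGen.setoid r) p : Qr) ≠ Quotient.mk (EqvGen.setoid r) q :=
    fun he => h (Quotient.exact he)
  let F0 : α → {x : Qr // x ≠ Quotient.mk (EqvGen.setoid r) q} := fun a =>
    if ha : EqvGen r a q then ⟨Quotient.mk _ p, hpq⟩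
    else ⟨Quotient.mk _ a, fun he => ha (Quotient.exact he)⟩
  have hF0 : ∀ a b, s a b → F0 a = F0 b := by
    intro x y hxy
    rcases hxy with hxy | ⟨he1, he2⟩
    · by_cases haq : EqvGen r x q
      · have hbq : EqvGen r y q := .trans _ _ _ (.symm _ _ (.rel _ _ hxy)) haq
        simp only [F0, dif_pos haq, dif_pos hbq]
      · have hbq : ¬ EqvGen r y q := fun hbq => haq (.trans _ _ _ (.rel _ _ hxy) hbq)
        simp only [F0, dif_neg haq, dif_neg hbq]
        exact Subtype.ext (Quotient.sound (.rel _ _ hxy))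
    · rw [he1, he2]
      have h2 : EqvGen r q q := .refl q
      simp only [F0, dif_neg h, dif_pos h2]
  have key : Nat.card (Quotient (EqvGen.setoid s)) =
      Nat.card {x : Qr // x ≠ Quotient.mk (EqvGen.setoid r) q} := by
    apply Nat.card_congr
    refine ⟨Quotient.lift F0 (fun a b (hab : EqvGen s a b) => ?_),
      fun x => Quotient.lift (fun a => Quotient.mk (EqvGen.setoid s) a)
        (fun a b (hab : EqvGen r a b) => Quotient.sound (eqvGen_bind hrs hab)) x.val, ?_, ?_⟩
    · induction hab with
      | rel x y h' => exact hF0 _ _ h'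
      | refl x => rfl
      | symm x y _ ih => exact ih.symm
      | trans x y z _ _ ih1 ih2 => exact ih1.trans ih2
    · intro z
      induction z using Quotient.ind with
      | _ a =>
        by_cases haq : EqvGen r a q
        · simp only [F0, Quotient.lift_mk, dif_pos haq]
          refine Quotient.sound ?_
          exact .trans _ _ _ (.rel _ _ (Or.inr ⟨rfl, rfl⟩)) (.symm _ _ (eqvGen_bind hrs haq))
        · simp only [F0, Quotient.lift_mk, dif_neg haq]
    · intro x
      obtain ⟨xv, hx⟩ := x
      induction xv using Quotient.ind with
      | _ a =>
        have haq : ¬ EqvGen r a q := fun he => hx (Quotient.sound he)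
        simp only [F0, Quotient.lift_mk, dif_neg haq]
  rw [key, ← card_ne_add_one]
end Generic

section Cyc

lemma cyc {V : Type*} [Finite V] (i j : V → V) (hi : ∀ v, i (i v) = v)
    (hj : ∀ v, j (j v) = v) (hi' : ∀ v, i v ≠ v) (hj' : ∀ v, j v ≠ v) (v : V) :
    Relation.ReflTransGen (fun x y => x ≠ v ∧ y ≠ v ∧ (i x = y ∨ j x = y)) (i v) (j v) := by
  classical
  set R : V → V → Prop := fun x y => x ≠ v ∧ y ≠ v ∧ (i x = y ∨ j x = y) with hR
  set τ : ℕ → V → V := fun k => if k % 2 = 0 then j else i with hτ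
  have hτinv : ∀ k x, τ k (τ k x) = x := by
    intro k x; by_cases hk : k % 2 = 0 <;> simp [hτ, hk, hi, hj]
  have hτne : ∀ k x, τ k x ≠ x := by
    intro k x; by_cases hk : k % 2 = 0 <;> simp [hτ, hk, hi', hj']
  set u : ℕ → V := fun n => Nat.rec (i v) (fun k x => τ k x) n with hu
  have hu0 : u 0 = i v := rfl
  have hustep : ∀ k, u (k + 1) = τ k (u k) := fun k => rfl
  -- existence of a return to v at an odd index
  have hodd : ∀ k, u (2 * k + 1) = (fun x => j (i x))^[k + 1] v := by
    intro k
    induction k with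
    | zero =>
      rw [show 2*0+1 = 0+1 by norm_num, hustep, hu0]
      simp [hτ]
    | succ m ih =>
      have e1 : u (2 * (m+1) + 1) = τ (2*m+2) (τ (2*m+1) (u (2*m+1))) := by
        rw [show 2 * (m+1) + 1 = (2*m+1) + 1 + 1 by ring, hustep, hustep]
      have h1 : τ (2*m+1) = i := by simp [hτ, Nat.add_mod]
      have h2 : τ (2*m+2) = j := by simp [hτ, Nat.add_mod]
      rw [e1, ih, h1, h2]
      simp [Function.iterate_succ_apply']
  have hret : ∃ n, u (n + 1) = v := by
    have hinj : Function.Injective (fun x => j (i x)) := by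
      intro a b hab
      have := congrArg i (congrArg j hab)
      simpa [hj, hi] using this
    obtain ⟨a, b, hne, hab⟩ := Finite.exists_ne_map_eq_of_infinite
      (fun k : ℕ => (fun x => j (i x))^[k] v)
    wlog hlt : a < b generalizing a b
    · exact this b a hne.symm hab.symm (by omega)
    have : (fun x => j (i x))^[b - a] v = v := by
      have h2 : (fun x => j (i x))^[a] ((fun x => j (i x))^[b-a] v) =
          (fun x => j (i x))^[a] v := by
        rw [← Function.iterate_add_apply]
        rw [show a + (b - a) = b by omega]
        exact hab.symm
      exact Function.Injective.iterate hinj a h2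
    refine ⟨2 * (b - a - 1), ?_⟩
    have hba : b - a - 1 + 1 = b - a := by omega
    rw [hodd, hba]
    exact this
  set N := Nat.find hret with hN
  have hNv : u (N + 1) = v := Nat.find_spec hret
  have hNmin : ∀ k, k < N → u (k + 1) ≠ v := fun k hk => Nat.find_min hret hk
  have hune : ∀ k, k ≤ N → u k ≠ v := by
    intro k hk
    cases k with
    | zero => exact hi' v
    | succ m => exact hNmin m (by omega)
  -- path from u 0 to u k for k ≤ N
  have hpath : ∀ k, k ≤ N → Relation.ReflTransGen R (u 0) (u k) := by
    intro k hk
    induction k with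
    | zero => exact .refl
    | succ m ih =>
      refine .tail (ih (by omega)) ?_
      refine ⟨hune m (by omega), hune (m+1) hk, ?_⟩
      rw [hustep m]
      by_cases hm : m % 2 = 0
      · exact Or.inr (by simp [hτ, hm])
      · exact Or.inl (by simp [hτ, hm])
  by_cases hNpar : N % 2 = 0
  · -- arrival via j : u N = j v
    have : τ N (u N) = v := by rw [← hustep]; exact hNv
    have huN : u N = j v := by
      have : j (u N) = v := by simpa [hτ, hNpar] using this
      rw [← this, hj]
    have := hpath N le_rfl
    rwa [hu0, huN] at this
  · -- arrival via i : contradiction by palindrome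
    exfalso
    have hNodd : N % 2 = 1 := by omega
    have huN : u N = i v := by
      have h1 : τ N (u N) = v := by rw [← hustep]; exact hNv
      have h2 : i (u N) = v := by simpa [hτ, hNpar] using h1
      rw [← h2, hi]
    have hpal : ∀ k, k ≤ N → u k = u (N - k) := by
      intro k
      induction k with
      | zero => intro _; simp [hu0, huN]
      | succ m ih =>
        intro hk
        have hm : m ≤ N := by omega
        have ihm := ih hm
        have e1 : u (N - m) = τ (N - m - 1) (u (N - m - 1)) := by
          have h9 : N - m = (N - m - 1) + 1 := by omega
          have h10 := hustep (N - m - 1)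
          rwa [← h9] at h10
        have hpar : (N - m - 1) % 2 = m % 2 := by omega
        have : τ (N - m - 1) = τ m := by
          by_cases hm2 : m % 2 = 0 <;> simp [hτ, hpar, hm2]
        rw [hustep, ihm, e1, this, hτinv]
        congr 1
    have hmid := hpal (N / 2) (by omega)
    have : N - N / 2 = N / 2 + 1 := by omega
    rw [this, hustep] at hmid
    exact hτne (N/2) (u (N/2)) hmid.symm
end Cyc
open CGraph in
/-- invariance of the G-degree under 1-dipole elimination, cf. Remark
`G-degree_cryst`: let `Γ` be a `(d+1)`-colored graph (`d ≥ 3`) containing a 1-dipole of color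
`c0` with endpoints `v1` and `v2 = Γ.inv c0 v1`, i.e. `v1, v2` are joined by exactly one edge,
which is `c0`-colored (`hone`), and they lie in different connected components of
`Γ_{Δ_d∖{c0}}` (`hsep`).  If `Γ'` is the `(d+1)`-colored graph obtained by eliminating the
dipole — its vertices are those of `Γ` except `v1, v2`, and for each color `c` the hanging
`c`-colored half-edges at the former `c`-neighbors of `v1` and of `v2` are welded together
(`hG'`) — then `ω_G(Γ') = ω_G(Γ)`. -/
theorem stmt19 {d : ℕ} (hd : 3 ≤ d) {V : Type} [Finite V] [DecidableEq V]
    (G : CGraph (Fin (d + 1)) V) (hconn : G.Conn) (c0 : Fin (d + 1)) (v1 : V)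
    (hone : ∀ c : Fin (d + 1), c ≠ c0 → G.inv c v1 ≠ G.inv c0 v1)
    (hsep : ¬ (G.restrict {c | c ≠ c0}).reach v1 (G.inv c0 v1))
    (G' : CGraph (Fin (d + 1)) {w : V // w ≠ v1 ∧ w ≠ G.inv c0 v1})
    (hG' : ∀ (c : Fin (d + 1)) (w : {w : V // w ≠ v1 ∧ w ≠ G.inv c0 v1}),
      (G'.inv c w).val =
        if G.inv c w.val = v1 then G.inv c (G.inv c0 v1)
        else if G.inv c w.val = G.inv c0 v1 then G.inv c v1
        else G.inv c w.val) :
    G'.omegaG = G.omegaG := by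
  classical
  have hv12 : v1 ≠ G.inv c0 v1 := fun h => G.no_fixed c0 v1 h.symm
  have hxmem : ∀ c : Fin (d+1), c ≠ c0 → G.inv c v1 ≠ v1 ∧ G.inv c v1 ≠ G.inv c0 v1 :=
    fun c hc => ⟨G.no_fixed c v1, hone c hc⟩
  have hymem : ∀ c : Fin (d+1), c ≠ c0 →
      G.inv c (G.inv c0 v1) ≠ v1 ∧ G.inv c (G.inv c0 v1) ≠ G.inv c0 v1 := by
    intro c hc
    refine ⟨fun h => hone c hc ?_, G.no_fixed c (G.inv c0 v1)⟩
    have h2 := congrArg (G.inv c) h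
    rw [G.invol] at h2
    exact h2.symm
  -- basic steps in G'
  have step' : ∀ (c : Fin (d+1)) (u w : V) (hu : u ≠ v1 ∧ u ≠ G.inv c0 v1)
      (hw : w ≠ v1 ∧ w ≠ G.inv c0 v1), G.inv c u = w → G'.inv c ⟨u, hu⟩ = ⟨w, hw⟩ := by
    intro c u w hu hw he
    have h := hG' c ⟨u, hu⟩
    rw [he, if_neg hw.1, if_neg hw.2] at h
    exact Subtype.ext h
  have stepx : ∀ (c : Fin (d+1)) (hu : G.inv c v1 ≠ v1 ∧ G.inv c v1 ≠ G.inv c0 v1)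
      (hw : G.inv c (G.inv c0 v1) ≠ v1 ∧ G.inv c (G.inv c0 v1) ≠ G.inv c0 v1),
      G'.inv c ⟨G.inv c v1, hu⟩ = ⟨G.inv c (G.inv c0 v1), hw⟩ := by
    intro c hu hw
    have h := hG' c ⟨G.inv c v1, hu⟩
    rw [if_pos (G.invol c v1)] at h
    exact Subtype.ext h
  have stepy : ∀ (c : Fin (d+1)) (hu : G.inv c v1 ≠ v1 ∧ G.inv c v1 ≠ G.inv c0 v1)
      (hw : G.inv c (G.inv c0 v1) ≠ v1 ∧ G.inv c (G.inv c0 v1) ≠ G.inv c0 v1),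
      G'.inv c ⟨G.inv c (G.inv c0 v1), hw⟩ = ⟨G.inv c v1, hu⟩ := by
    intro c hu hw
    have h := hG' c ⟨G.inv c (G.inv c0 v1), hw⟩
    rw [if_neg (by rw [G.invol]; exact hv12.symm), if_pos (G.invol c (G.inv c0 v1))] at h
    exact Subtype.ext h
  have reachstep : ∀ (c : Fin (d+1)), c ≠ c0 → ∀ (x y : V), G.inv c x = y →
      (G.restrict {c | c ≠ c0}).reach x y :=
    fun c hc x y he => Relation.EqvGen.rel _ _ ⟨⟨c, hc⟩, he⟩
  -- the key connectivity lemma: neighbours of v1 of colors ≠ c0 are joined in G'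
  have connect : ∀ (a b : Fin (d+1)) (ha : a ≠ c0) (hb : b ≠ c0),
      EqvGen (fun u w : {w : V // w ≠ v1 ∧ w ≠ G.inv c0 v1} =>
          ∃ c ∈ ({a, b} : Set (Fin (d+1))), G'.inv c u = w)
        ⟨G.inv a v1, hxmem a ha⟩ ⟨G.inv b v1, hxmem b hb⟩ := by
    intro a b ha hb
    have hcyc := cyc (G.inv a) (G.inv b) (G.invol a) (G.invol b) (G.no_fixed a) (G.no_fixed b) v1
    have main : ∀ y, Relation.ReflTransGen
        (fun x y => x ≠ v1 ∧ y ≠ v1 ∧ (G.inv a x = y ∨ G.inv b x = y)) (G.inv a v1) y →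
        ∃ h1 : y ≠ v1 ∧ y ≠ G.inv c0 v1, (G.restrict {c | c ≠ c0}).reach v1 y ∧
          EqvGen (fun u w : {w : V // w ≠ v1 ∧ w ≠ G.inv c0 v1} =>
              ∃ c ∈ ({a, b} : Set (Fin (d+1))), G'.inv c u = w)
            ⟨G.inv a v1, hxmem a ha⟩ ⟨y, h1⟩ := by
      intro y hy
      induction hy with
      | refl => exact ⟨hxmem a ha, reachstep a ha v1 _ rfl, EqvGen.refl _⟩
      | @tail mid z hprev hstep ih =>
        obtain ⟨h1, hr, he⟩ := ih
        obtain ⟨hx1, hz1, hs⟩ := hstep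
        have hcc : ∃ cc, cc ≠ c0 ∧ cc ∈ ({a, b} : Set (Fin (d+1))) ∧ G.inv cc mid = z := by
          rcases hs with h | h
          · exact ⟨a, ha, Set.mem_insert _ _, h⟩
          · exact ⟨b, hb, Set.mem_insert_of_mem _ rfl, h⟩
        obtain ⟨cc, hcc0, hccB, hce⟩ := hcc
        have hrz : (G.restrict {c | c ≠ c0}).reach v1 z :=
          Relation.EqvGen.trans _ _ _ hr (reachstep cc hcc0 mid z hce)
        have hz2 : z ≠ G.inv c0 v1 := fun h => hsep (h ▸ hrz)
        exact ⟨⟨hz1, hz2⟩, hrz, EqvGen.trans _ _ _ he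
          (EqvGen.rel _ _ ⟨cc, hccB, step' cc mid z h1 ⟨hz1, hz2⟩ hce⟩)⟩
    obtain ⟨h1, -, he⟩ := main _ hcyc
    exact he
  have relmono : ∀ (B B2 : Set (Fin (d+1))), B ⊆ B2 →
      ∀ (u w : {w : V // w ≠ v1 ∧ w ≠ G.inv c0 v1}),
      EqvGen (fun u w : {w : V // w ≠ v1 ∧ w ≠ G.inv c0 v1} =>
          ∃ c ∈ B, G'.inv c u = w) u w →
      EqvGen (fun u w : {w : V // w ≠ v1 ∧ w ≠ G.inv c0 v1} =>
          ∃ c ∈ B2, G'.inv c u = w) u w := by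
    intro B B2 hsub u w h
    refine eqvGen_bind ?_ h
    rintro x y ⟨c, hc, he⟩
    exact EqvGen.rel _ _ ⟨c, hsub hc, he⟩
  -- collapse map preserves single steps
  have hg_main : ∀ (B : Set (Fin (d+1))) (b0 : Fin (d+1)) (hb0 : b0 ≠ c0) (_ : b0 ∈ B)
      (hcon : ∀ c, c ∈ B → ∀ hc : c ≠ c0,
        EqvGen (fun u w : {w : V // w ≠ v1 ∧ w ≠ G.inv c0 v1} => ∃ c ∈ B, G'.inv c u = w)
          ⟨G.inv b0 v1, hxmem b0 hb0⟩ ⟨G.inv c v1, hxmem c hc⟩)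
      (v w : V) (c : Fin (d+1)) (hc : c ∈ B) (he : G.inv c v = w),
      EqvGen (fun u w : {w : V // w ≠ v1 ∧ w ≠ G.inv c0 v1} => ∃ c ∈ B, G'.inv c u = w)
        (if h : v ≠ v1 ∧ v ≠ G.inv c0 v1 then ⟨v, h⟩ else ⟨G.inv b0 v1, hxmem b0 hb0⟩)
        (if h : w ≠ v1 ∧ w ≠ G.inv c0 v1 then ⟨w, h⟩ else ⟨G.inv b0 v1, hxmem b0 hb0⟩) := by
    intro B b0 hb0 hb0B hcon v w c hc he
    by_cases hv : v ≠ v1 ∧ v ≠ G.inv c0 v1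
    · by_cases hw : w ≠ v1 ∧ w ≠ G.inv c0 v1
      · rw [dif_pos hv, dif_pos hw]
        exact EqvGen.rel _ _ ⟨c, hc, step' c v w hv hw he⟩
      · rw [dif_pos hv, dif_neg hw]
        have hw' : w = v1 ∨ w = G.inv c0 v1 := by tauto
        rcases hw' with hw1 | hw2
        · rw [hw1] at he
          have h3 := congrArg (G.inv c) he
          rw [G.invol] at h3
          have hcne : c ≠ c0 := by
            intro hcc
            apply hv.2
            rw [hcc] at h3
            exact h3
          have hveq : (⟨v, hv⟩ : {w : V // w ≠ v1 ∧ w ≠ G.inv c0 v1}) =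
              ⟨G.inv c v1, hxmem c hcne⟩ := Subtype.ext h3
          rw [hveq]
          exact EqvGen.symm _ _ (hcon c hc hcne)
        · rw [hw2] at he
          have h3 := congrArg (G.inv c) he
          rw [G.invol] at h3
          have hcne : c ≠ c0 := by
            intro hcc
            apply hv.1
            rw [hcc, G.invol] at h3
            exact h3
          have hveq : (⟨v, hv⟩ : {w : V // w ≠ v1 ∧ w ≠ G.inv c0 v1}) =
              ⟨G.inv c (G.inv c0 v1), hymem c hcne⟩ := Subtype.ext h3
          rw [hveq]
          exact EqvGen.trans _ _ _ (EqvGen.rel _ _ ⟨c, hc, stepy c (hxmem c hcne) (hymem c hcne)⟩)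
            (EqvGen.symm _ _ (hcon c hc hcne))
    · by_cases hw : w ≠ v1 ∧ w ≠ G.inv c0 v1
      · rw [dif_neg hv, dif_pos hw]
        have hv' : v = v1 ∨ v = G.inv c0 v1 := by tauto
        rcases hv' with hv1 | hv2
        · rw [hv1] at he
          have hcne : c ≠ c0 := by
            intro hcc
            apply hw.2
            rw [← he, hcc]
          have hweq : (⟨w, hw⟩ : {w : V // w ≠ v1 ∧ w ≠ G.inv c0 v1}) =
              ⟨G.inv c v1, hxmem c hcne⟩ := Subtype.ext he.symm
          rw [hweq]
          exact hcon c hc hcne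
        · rw [hv2] at he
          have hcne : c ≠ c0 := by
            intro hcc
            apply hw.1
            rw [← he, hcc, G.invol]
          have hweq : (⟨w, hw⟩ : {w : V // w ≠ v1 ∧ w ≠ G.inv c0 v1}) =
              ⟨G.inv c (G.inv c0 v1), hymem c hcne⟩ := Subtype.ext he.symm
          rw [hweq]
          exact EqvGen.trans _ _ _ (hcon c hc hcne)
            (EqvGen.rel _ _ ⟨c, hc, stepx c (hxmem c hcne) (hymem c hcne)⟩)
      · rw [dif_neg hv, dif_neg hw]
        exact EqvGen.refl _
  -- single steps of G' map to paths through the dipole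
  have hf_main : ∀ (B : Set (Fin (d+1))) (S : V → V → Prop)
      (hS1 : ∀ (x y : V) (c : Fin (d+1)), c ∈ B → G.inv c x = y → EqvGen S x y)
      (hS2 : EqvGen S v1 (G.inv c0 v1))
      (u w : {w : V // w ≠ v1 ∧ w ≠ G.inv c0 v1}) (c : Fin (d+1)) (hc : c ∈ B),
      G'.inv c u = w → EqvGen S u.val w.val := by
    intro B S hS1 hS2 u w c hc he
    have hval : w.val = if G.inv c u.val = v1 then G.inv c (G.inv c0 v1)
        else if G.inv c u.val = G.inv c0 v1 then G.inv c v1 else G.inv c u.val := by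
      rw [← he]; exact hG' c u
    by_cases h1 : G.inv c u.val = v1
    · rw [if_pos h1] at hval
      exact EqvGen.trans _ _ _ (hS1 u.val v1 c hc h1)
        (EqvGen.trans _ _ _ hS2 (hS1 (G.inv c0 v1) w.val c hc hval.symm))
    · by_cases h2 : G.inv c u.val = G.inv c0 v1
      · rw [if_neg h1, if_pos h2] at hval
        exact EqvGen.trans _ _ _ (hS1 u.val (G.inv c0 v1) c hc h2)
          (EqvGen.trans _ _ _ (EqvGen.symm _ _ hS2) (hS1 v1 w.val c hc hval.symm))
      · rw [if_neg h1, if_neg h2] at hval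
        exact hS1 u.val w.val c hc hval.symm
  -- equality of component counts when c0 ∈ B
  have hEQ : ∀ (B : Set (Fin (d+1))) (hc0B : c0 ∈ B) (b0 : Fin (d+1)) (hb0 : b0 ≠ c0)
      (hb0B : b0 ∈ B)
      (hcon : ∀ c, c ∈ B → ∀ hc : c ≠ c0,
        EqvGen (fun u w : {w : V // w ≠ v1 ∧ w ≠ G.inv c0 v1} => ∃ c ∈ B, G'.inv c u = w)
          ⟨G.inv b0 v1, hxmem b0 hb0⟩ ⟨G.inv c v1, hxmem c hc⟩),
      G'.g B = G.g B := by
    intro B hc0B b0 hb0 hb0B hcon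
    refine card_quot_eq _ _ Subtype.val
      (fun v => if h : v ≠ v1 ∧ v ≠ G.inv c0 v1 then ⟨v, h⟩ else ⟨G.inv b0 v1, hxmem b0 hb0⟩)
      ?_ ?_ ?_ ?_
    · rintro u w ⟨c, hc, he⟩
      exact hf_main B _ (fun x y c' hc' he' => EqvGen.rel _ _ ⟨c', hc', he'⟩)
        (EqvGen.rel _ _ ⟨c0, hc0B, rfl⟩) u w c hc he
    · rintro x y ⟨c, hc, he⟩
      exact hg_main B b0 hb0 hb0B hcon x y c hc he
    · intro u
      simp only [dif_pos u.2]
      exact EqvGen.refl _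
    · intro v
      by_cases hv : v ≠ v1 ∧ v ≠ G.inv c0 v1
      · simp only [dif_pos hv]
        exact EqvGen.refl _
      · simp only [dif_neg hv]
        have hstep1 : EqvGen (fun v w : V => ∃ c ∈ B, G.inv c v = w) (G.inv b0 v1) v1 :=
          EqvGen.rel _ _ ⟨b0, hb0B, G.invol b0 v1⟩
        have hv' : v = v1 ∨ v = G.inv c0 v1 := by tauto
        rcases hv' with hv1 | hv2
        · rw [hv1]
          exact hstep1
        · rw [hv2]
          exact EqvGen.trans _ _ _ hstep1 (EqvGen.rel _ _ ⟨c0, hc0B, rfl⟩)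
  -- component count drops by one for pairs avoiding c0
  have hL1 : ∀ (a b : Fin (d+1)) (ha : a ≠ c0) (hb : b ≠ c0),
      G.g {a, b} = G'.g {a, b} + 1 := by
    intro a b ha hb
    have hcne : ∀ c, c ∈ ({a, b} : Set (Fin (d+1))) → c ≠ c0 := by
      intro c hcB
      rcases Set.mem_insert_iff.mp hcB with rfl | h
      · exact ha
      · rw [Set.mem_singleton_iff] at h; subst h; exact hb
    have hglue : ¬ EqvGen (fun v w : V => ∃ c ∈ ({a, b} : Set (Fin (d+1))), G.inv c v = w)
        v1 (G.inv c0 v1) := by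
      intro h
      apply hsep
      refine eqvGen_bind ?_ h
      rintro x y ⟨c, hc, he⟩
      exact EqvGen.rel _ _ ⟨⟨c, hcne c hc⟩, he⟩
    have hconB : ∀ c, c ∈ ({a, b} : Set (Fin (d+1))) → ∀ hc : c ≠ c0,
        EqvGen (fun u w : {w : V // w ≠ v1 ∧ w ≠ G.inv c0 v1} =>
            ∃ c ∈ ({a, b} : Set (Fin (d+1))), G'.inv c u = w)
          ⟨G.inv a v1, hxmem a ha⟩ ⟨G.inv c v1, hxmem c hc⟩ := by
      intro c hcB hc
      rcases Set.mem_insert_iff.mp hcB with rfl | h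
      · exact EqvGen.refl _
      · rw [Set.mem_singleton_iff] at h; subst h
        exact connect a c ha hc
    have e1 : G.g {a, b} = Nat.card (Quotient (EqvGen.setoid
        (fun x y : V => (∃ c ∈ ({a, b} : Set (Fin (d+1))), G.inv c x = y) ∨
          (x = v1 ∧ y = G.inv c0 v1)))) + 1 :=
      card_quot_glue _ v1 (G.inv c0 v1) hglue
    have e2 : Nat.card (Quotient (EqvGen.setoid
        (fun x y : V => (∃ c ∈ ({a, b} : Set (Fin (d+1))), G.inv c x = y) ∨
          (x = v1 ∧ y = G.inv c0 v1)))) = G'.g {a, b} := by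
      refine card_quot_eq _ _
        (fun v => if h : v ≠ v1 ∧ v ≠ G.inv c0 v1 then ⟨v, h⟩ else ⟨G.inv a v1, hxmem a ha⟩)
        Subtype.val ?_ ?_ ?_ ?_
      · rintro v w (⟨c, hc, he⟩ | ⟨hv1, hv2⟩)
        · exact hg_main {a, b} a ha (Set.mem_insert _ _) hconB v w c hc he
        · simp only [dif_neg (fun h : v ≠ v1 ∧ v ≠ G.inv c0 v1 => h.1 hv1),
            dif_neg (fun h : w ≠ v1 ∧ w ≠ G.inv c0 v1 => h.2 hv2)]
          exact EqvGen.refl _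
      · rintro u w ⟨c, hc, he⟩
        exact hf_main {a, b} _
          (fun x y c' hc' he' => EqvGen.rel _ _ (Or.inl ⟨c', hc', he'⟩))
          (EqvGen.rel _ _ (Or.inr ⟨rfl, rfl⟩)) u w c hc he
      · intro v
        by_cases hv : v ≠ v1 ∧ v ≠ G.inv c0 v1
        · simp only [dif_pos hv]
          exact EqvGen.refl _
        · simp only [dif_neg hv]
          have hstep1 : EqvGen (fun x y : V => (∃ c ∈ ({a, b} : Set (Fin (d+1))),
              G.inv c x = y) ∨ (x = v1 ∧ y = G.inv c0 v1)) (G.inv a v1) v1 :=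
            EqvGen.rel _ _ (Or.inl ⟨a, Set.mem_insert _ _, G.invol a v1⟩)
          have hv' : v = v1 ∨ v = G.inv c0 v1 := by tauto
          rcases hv' with hv1 | hv2
          · rw [hv1]
            exact hstep1
          · rw [hv2]
            exact EqvGen.trans _ _ _ hstep1 (EqvGen.rel _ _ (Or.inr ⟨rfl, rfl⟩))
      · intro u
        simp only [dif_pos u.2]
        exact EqvGen.refl _
    rw [e1, e2]
  -- component count preserved for pairs containing c0
  have hL2 : ∀ b : Fin (d+1), b ≠ c0 → G'.g {c0, b} = G.g {c0, b} := by
    intro b hb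
    refine hEQ {c0, b} (Set.mem_insert _ _) b hb (Set.mem_insert_of_mem _ rfl) ?_
    intro c hcB hc
    rcases Set.mem_insert_iff.mp hcB with rfl | h
    · exact absurd rfl hc
    · rw [Set.mem_singleton_iff] at h; subst h
      exact EqvGen.refl _
  -- a color different from c0
  haveI : Nontrivial (Fin (d+1)) := Fin.nontrivial_iff_two_le.mpr (by omega)
  obtain ⟨b0, hb0⟩ := exists_ne c0
  -- G' is connected
  have hL3 : G'.g Set.univ = 1 := by
    have h := hEQ Set.univ trivial b0 hb0 trivial ?_
    · rw [h]; exact hconn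
    · intro c _ hc
      exact relmono {b0, c} Set.univ (Set.subset_univ _) _ _ (connect b0 c hb0 hc)
  -- cardinalities
  have hV2 : (2 : ℕ) ≤ Nat.card V := by
    haveI := Fintype.ofFinite V
    rw [Nat.card_eq_fintype_card]
    have h : ({v1, G.inv c0 v1} : Finset V).card ≤ Fintype.card V := by
      rw [← Finset.card_univ]; exact Finset.card_le_card (Finset.subset_univ _)
    rwa [Finset.card_insert_of_notMem (by simp [hv12]), Finset.card_singleton] at h
  have hcardV' : Nat.card {w : V // w ≠ v1 ∧ w ≠ G.inv c0 v1} = Nat.card V - 2 := by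
    haveI := Fintype.ofFinite V
    rw [Nat.card_eq_fintype_card, Nat.card_eq_fintype_card, Fintype.card_subtype]
    rw [show (Finset.univ.filter fun w : V => w ≠ v1 ∧ w ≠ G.inv c0 v1) =
        Finset.univ \ {v1, G.inv c0 v1} from by
      ext w; simp [not_or]]
    rw [Finset.card_sdiff_of_subset (Finset.subset_univ _),
      Finset.card_insert_of_notMem (by simp [hv12]), Finset.card_singleton,
      Finset.card_univ]
  -- per-pair comparison
  have hpair : ∀ (σ : Equiv.Perm (Fin (d+1))), (∀ c, σ c ≠ c) → ∀ c : Fin (d+1),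
      (G.g {c, σ c} : ℚ) = G'.g {c, σ c} + (if c = c0 ∨ σ c = c0 then 0 else 1) := by
    intro σ hσ c
    by_cases h1 : c = c0
    · rw [h1, hL2 (σ c0) (hσ c0), if_pos (Or.inl rfl), add_zero]
    · by_cases h2 : σ c = c0
      · have hpc : ({c, σ c} : Set (Fin (d+1))) = {c0, c} := by rw [h2, Set.pair_comm]
        rw [hpc, hL2 c h1, if_pos (Or.inr h2), add_zero]
      · rw [if_neg (by tauto), hL1 c (σ c) h1 h2]
        push_cast
        ring
  have hsum : ∀ (σ : Equiv.Perm (Fin (d+1))), (∀ c, σ c ≠ c) →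
      (∑ᶠ c : Fin (d+1), (G'.g {c, σ c} : ℚ)) =
        (∑ᶠ c : Fin (d+1), (G.g {c, σ c} : ℚ)) - (d - 1) := by
    intro σ hσ
    rw [finsum_eq_sum_of_fintype, finsum_eq_sum_of_fintype]
    rw [Finset.sum_congr rfl (fun c _ => hpair σ hσ c), Finset.sum_add_distrib]
    have hinvne : σ⁻¹ c0 ≠ c0 := by
      intro h
      have h2 := hσ (σ⁻¹ c0)
      rw [show σ (σ⁻¹ c0) = c0 from σ.apply_symm_apply c0] at h2
      exact h2 h.symm
    have hfilt : (Finset.univ.filter fun c : Fin (d+1) => c = c0 ∨ σ c = c0) =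
        {c0, σ⁻¹ c0} := by
      ext c
      simp only [Finset.mem_filter, Finset.mem_univ, true_and, Finset.mem_insert,
        Finset.mem_singleton]
      constructor
      · rintro (rfl | h)
        · exact Or.inl rfl
        · right; rw [← h, show σ⁻¹ (σ c) = c from σ.symm_apply_apply c]
      · rintro (rfl | rfl)
        · exact Or.inl rfl
        · right; exact σ.apply_symm_apply c0
    have hcount : (∑ c : Fin (d+1), if c = c0 ∨ σ c = c0 then (0 : ℚ) else 1) = d - 1 := by
      rw [Finset.sum_ite, Finset.sum_const_zero, Finset.sum_const, zero_add]
      have hc2 : ({c0, σ⁻¹ c0} : Finset (Fin (d+1))).card = 2 := by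
        rw [Finset.card_insert_of_notMem (by rw [Finset.mem_singleton]; exact Ne.symm hinvne), Finset.card_singleton]
      have htot := Finset.card_filter_add_card_filter_not
        (s := (Finset.univ : Finset (Fin (d+1)))) (p := fun c => c = c0 ∨ σ c = c0)
      rw [hfilt, hc2, Finset.card_univ, Fintype.card_fin] at htot
      have hcard : (Finset.univ.filter fun c : Fin (d+1) => ¬(c = c0 ∨ σ c = c0)).card
          = d - 1 := by omega
      rw [hcard, nsmul_eq_mul]
      rw [Nat.cast_sub (by omega : 1 ≤ d)]
      push_cast
      ring
    rw [hcount]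
    ring
  have hchi : ∀ (σ : Equiv.Perm (Fin (d+1))), (∀ c, σ c ≠ c) → G'.chi σ = G.chi σ := by
    intro σ hσ
    unfold CGraph.chi
    rw [hsum σ hσ, hcardV']
    have hC : Nat.card (Fin (d+1)) = d + 1 := by simp [Nat.card_eq_fintype_card]
    rw [hC, Nat.cast_sub hV2]
    push_cast
    ring
  have hrho : ∀ (σ : Equiv.Perm (Fin (d+1))), IsCyclicPerm σ → G'.rho σ = G.rho σ := by
    intro σ hσ
    unfold CGraph.rho
    rw [hchi σ hσ.2, hL3, show G.g Set.univ = 1 from hconn]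
  unfold CGraph.omegaG
  congr 1
  exact finsum_congr (fun σ => hrho σ.val σ.2)
end
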